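/- Let L ∈ ℝ^{ν×ν}⟨x,x*⟩ be a linear pencil. The following are equivalent: (i) the L-real radical of the zero left ideal {0} ⊆ ℝ⟨x,x*⟩ is all of ℝ⟨x,x*⟩; (ii) the linear matrix inequality L(x) ⪰ 0 is infeasible over ℝ^g (i.e., there is no x ∈ ℝ^g, evaluated as a tuple of 1×1 matrices, with L(x) ⪰ 0); (iii) for every n, the linear matrix inequality L(X) ⪰ 0 is infeasible over g-tuples X of real n×n matrices. -/

import Mathlib

open scoped BigOperators
open Matrix

/-- The `2g` free letters: `Sum.inl i` is `xᵢ`, `Sum.inr i` is `xᵢ*`. -/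
abbrev Lttr (g : ℕ) := Fin g ⊕ Fin g

/-- The free real algebra `ℝ⟨x,x*⟩` on `2g` letters. -/
abbrev FreePoly (g : ℕ) := FreeAlgebra ℝ (Lttr g)

noncomputable def xvar {g : ℕ} (i : Fin g) : FreePoly g := FreeAlgebra.ι ℝ (Sum.inl i)

noncomputable def xstar {g : ℕ} (i : Fin g) : FreePoly g := FreeAlgebra.ι ℝ (Sum.inr i)

/-- The involution `*` on `ℝ⟨x,x*⟩`: linear, reverses products, swaps `xᵢ` and `xᵢ*`. -/
noncomputable def pstar {g : ℕ} (p : FreePoly g) : FreePoly g :=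
  MulOpposite.unop
    (FreeAlgebra.lift ℝ
      (fun l : Lttr g => MulOpposite.op (FreeAlgebra.ι ℝ (Sum.swap l))) p)

/-- Evaluation of a noncommutative polynomial at a `g`-tuple of real `n × n` matrices,
sending `xᵢ` to `X i` and `xᵢ*` to `(X i)ᵀ`. -/
noncomputable def evalP {g n : ℕ} (X : Fin g → Matrix (Fin n) (Fin n) ℝ) :
    FreePoly g →ₐ[ℝ] Matrix (Fin n) (Fin n) ℝ :=
  FreeAlgebra.lift ℝ (Sum.elim X (fun i => (X i)ᵀ))

/-- Entrywise (block) evaluation of a `ν × ℓ` matrix polynomial. -/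
noncomputable def evalM {g n ν ℓ : ℕ} (X : Fin g → Matrix (Fin n) (Fin n) ℝ)
    (p : Matrix (Fin ν) (Fin ℓ) (FreePoly g)) :
    Matrix (Fin ν × Fin n) (Fin ℓ × Fin n) ℝ :=
  fun ir js => evalP X (p ir.1 js.1) ir.2 js.2

/-- Evaluation of a row vector of polynomials (an element of `ℝ^{1×ℓ}⟨x,x*⟩`). -/
noncomputable def evalRow {g n ℓ : ℕ} (X : Fin g → Matrix (Fin n) (Fin n) ℝ)
    (p : Fin ℓ → FreePoly g) : Matrix (Fin n) (Fin ℓ × Fin n) ℝ :=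
  fun r js => evalP X (p js.1) r js.2

/-- The involution on matrices of polynomials: entrywise `*` combined with transpose. -/
noncomputable def starM {g a b : ℕ} (p : Matrix (Fin a) (Fin b) (FreePoly g)) :
    Matrix (Fin b) (Fin a) (FreePoly g) :=
  fun i j => pstar (p j i)

/-- For a row vector `p ∈ ℝ^{1×ℓ}⟨x,x*⟩`, the `ℓ × ℓ` matrix `p*p`. -/
noncomputable def sqForm {g ℓ : ℕ} (p : Fin ℓ → FreePoly g) :
    Matrix (Fin ℓ) (Fin ℓ) (FreePoly g) :=
  fun a b => pstar (p a) * p b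

/-- For `q ∈ ℝ^{ν×ℓ}⟨x,x*⟩`, the `ℓ × ℓ` matrix `q*Lq`. -/
noncomputable def quadForm {g ν ℓ : ℕ} (L : Matrix (Fin ν) (Fin ν) (FreePoly g))
    (q : Matrix (Fin ν) (Fin ℓ) (FreePoly g)) : Matrix (Fin ℓ) (Fin ℓ) (FreePoly g) :=
  starM q * L * q

/-- For row vectors `r, ι ∈ ℝ^{1×ℓ}⟨x,x*⟩`, the `ℓ × ℓ` matrix `r*ι`. -/
noncomputable def outerStar {g ℓ : ℕ} (r ι : Fin ℓ → FreePoly g) :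
    Matrix (Fin ℓ) (Fin ℓ) (FreePoly g) :=
  fun a b => pstar (r a) * ι b

/-- `m ∈ ℝ^{a×1}I`: every row of the matrix polynomial `m` lies in the left module `I`. -/
def rowsInM {g a ℓ : ℕ} (I : Submodule (FreePoly g) (Fin ℓ → FreePoly g))
    (m : Matrix (Fin a) (Fin ℓ) (FreePoly g)) : Prop :=
  ∀ i, m i ∈ I

/-- Every row of the matrix polynomial `m` lies in the real subspace `C`. -/
def rowsInR {g a ℓ : ℕ} (C : Submodule ℝ (Fin ℓ → FreePoly g))
    (m : Matrix (Fin a) (Fin ℓ) (FreePoly g)) : Prop :=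
  ∀ i, m i ∈ C

/-- The set `ℝ^{ℓ×1}I + I*ℝ^{1×ℓ}` of `ℓ × ℓ` matrix polynomials. -/
def modPlusStar {g ℓ : ℕ} (I : Submodule (FreePoly g) (Fin ℓ → FreePoly g)) :
    Set (Matrix (Fin ℓ) (Fin ℓ) (FreePoly g)) :=
  { m | ∃ u v : Matrix (Fin ℓ) (Fin ℓ) (FreePoly g),
      rowsInM I u ∧ rowsInM I v ∧ m = u + starM v }

/-- `I` is an `L`-real left module. -/
def IsLReal {g ν ℓ : ℕ} (L : Matrix (Fin ν) (Fin ν) (FreePoly g))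
    (I : Submodule (FreePoly g) (Fin ℓ → FreePoly g)) : Prop :=
  ∀ (a b : ℕ) (p : Fin a → (Fin ℓ → FreePoly g))
    (q : Fin b → Matrix (Fin ν) (Fin ℓ) (FreePoly g)),
    ((∑ i, sqForm (p i)) + ∑ j, quadForm L (q j)) ∈ modPlusStar I →
    (∀ i, p i ∈ I) ∧ ∀ j, rowsInM I (L * q j)

/-- `I` is a strongly `L`-real left module. -/
def IsLRealStrong {g ν ℓ : ℕ} (L : Matrix (Fin ν) (Fin ν) (FreePoly g))
    (I : Submodule (FreePoly g) (Fin ℓ → FreePoly g)) : Prop :=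
  ∀ (a b : ℕ) (p : Fin a → (Fin ℓ → FreePoly g))
    (q : Fin b → Matrix (Fin ν) (Fin ℓ) (FreePoly g)),
    ((∑ i, sqForm (p i)) + ∑ j, quadForm L (q j)) ∈ modPlusStar I →
    (∀ i, p i ∈ I) ∧ ∀ j, rowsInM I (q j)

/-- `I` is a real left module. -/
def IsRealMod {g ℓ : ℕ} (I : Submodule (FreePoly g) (Fin ℓ → FreePoly g)) : Prop :=
  ∀ (a : ℕ) (p : Fin a → (Fin ℓ → FreePoly g)),
    (∑ i, sqForm (p i)) ∈ modPlusStar I → ∀ i, p i ∈ I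

/-- The `L`-real radical of `I`: the smallest `L`-real left module containing `I`. -/
noncomputable def Lrad {g ν ℓ : ℕ} (L : Matrix (Fin ν) (Fin ν) (FreePoly g))
    (I : Submodule (FreePoly g) (Fin ℓ → FreePoly g)) :
    Submodule (FreePoly g) (Fin ℓ → FreePoly g) :=
  sInf { J | I ≤ J ∧ IsLReal L J }

/-- The strong `L`-real radical of `I`. -/
noncomputable def LradStrong {g ν ℓ : ℕ} (L : Matrix (Fin ν) (Fin ν) (FreePoly g))
    (I : Submodule (FreePoly g) (Fin ℓ → FreePoly g)) :
    Submodule (FreePoly g) (Fin ℓ → FreePoly g) :=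
  sInf { J | I ≤ J ∧ IsLRealStrong L J }

/-- The real radical of `I`: the smallest real left module containing `I`. -/
noncomputable def realRad {g ℓ : ℕ} (I : Submodule (FreePoly g) (Fin ℓ → FreePoly g)) :
    Submodule (FreePoly g) (Fin ℓ → FreePoly g) :=
  sInf { J | I ≤ J ∧ IsRealMod J }

/-- The word `w` as a product of letters in `ℝ⟨x,x*⟩`. -/
noncomputable def fword {g : ℕ} (w : List (Lttr g)) : FreePoly g :=
  (w.map (FreeAlgebra.ι ℝ)).prod

/-- The subspace of polynomials of degree at most `d`. -/
noncomputable def degLE (g d : ℕ) : Submodule ℝ (FreePoly g) :=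
  Submodule.span ℝ { p | ∃ w : List (Lttr g), w.length ≤ d ∧ p = fword w }

/-- The monomial `eᵢ ⊗ w` in `ℝ^{1×ℓ}⟨x,x*⟩`. -/
noncomputable def monoRow {g ℓ : ℕ} (i : Fin ℓ) (w : List (Lttr g)) : Fin ℓ → FreePoly g :=
  fun j => if j = i then fword w else 0

/-- `C` is a right chip space: it is spanned by a set of monomials and is closed
under taking middle chips. -/
def IsChipSpace {g ℓ : ℕ} (C : Submodule ℝ (Fin ℓ → FreePoly g)) : Prop :=
  (∃ S : Set (Fin ℓ × List (Lttr g)),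
      C = Submodule.span ℝ ((fun m => monoRow m.1 m.2) '' S)) ∧
  ∀ (i : Fin ℓ) (w1 w2 w3 : List (Lttr g)),
    monoRow i (w1 ++ w2 ++ w3) ∈ C → monoRow i w3 ∈ C → monoRow i (w2 ++ w3) ∈ C

/-- `C` is full: it contains every right chip of each of its monomials. -/
def IsFullChip {g ℓ : ℕ} (C : Submodule ℝ (Fin ℓ → FreePoly g)) : Prop :=
  ∀ (i : Fin ℓ) (w1 w2 : List (Lttr g)), monoRow i (w1 ++ w2) ∈ C → monoRow i w2 ∈ C

/-- The subspace `ℝ⟨x,x*⟩_d C`: the span of all products `q • c` with `deg q ≤ d`, `c ∈ C`. -/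
noncomputable def degC {g ℓ : ℕ} (d : ℕ) (C : Submodule ℝ (Fin ℓ → FreePoly g)) :
    Submodule ℝ (Fin ℓ → FreePoly g) :=
  Submodule.span ℝ { v | ∃ q ∈ degLE g d, ∃ c ∈ C, v = fun j => q * c j }

/-- The subspace `C*ℝ⟨x,x*⟩₁C` of `ℓ × ℓ` matrix polynomials. -/
noncomputable def sandC {g ℓ : ℕ} (C : Submodule ℝ (Fin ℓ → FreePoly g)) :
    Submodule ℝ (Matrix (Fin ℓ) (Fin ℓ) (FreePoly g)) :=
  Submodule.span ℝ
    { m | ∃ a ∈ C, ∃ b ∈ C, ∃ q ∈ degLE g 1,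
        m = fun u v => pstar (a u) * q * b v }

/-- `I` is an `(L,C)`-real left module. -/
def IsLCReal {g ν ℓ : ℕ} (L : Matrix (Fin ν) (Fin ν) (FreePoly g))
    (C : Submodule ℝ (Fin ℓ → FreePoly g))
    (I : Submodule (FreePoly g) (Fin ℓ → FreePoly g)) : Prop :=
  ∀ (a b : ℕ) (p : Fin a → (Fin ℓ → FreePoly g))
    (q : Fin b → Matrix (Fin ν) (Fin ℓ) (FreePoly g)),
    (∀ i, p i ∈ C) → (∀ j, rowsInR C (q j)) →
    ((∑ i, sqForm (p i)) + ∑ j, quadForm L (q j)) ∈ modPlusStar I →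
    (∀ i, p i ∈ I) ∧ ∀ j, rowsInM I (L * q j)

/-- `I` is a strongly `(L,C)`-real left module. -/
def IsLCRealStrong {g ν ℓ : ℕ} (L : Matrix (Fin ν) (Fin ν) (FreePoly g))
    (C : Submodule ℝ (Fin ℓ → FreePoly g))
    (I : Submodule (FreePoly g) (Fin ℓ → FreePoly g)) : Prop :=
  ∀ (a b : ℕ) (p : Fin a → (Fin ℓ → FreePoly g))
    (q : Fin b → Matrix (Fin ν) (Fin ℓ) (FreePoly g)),
    (∀ i, p i ∈ C) → (∀ j, rowsInR C (q j)) →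
    ((∑ i, sqForm (p i)) + ∑ j, quadForm L (q j)) ∈ modPlusStar I →
    (∀ i, p i ∈ I) ∧ ∀ j, rowsInM I (q j)

/-- The `(L,C)`-real radical of `I`. -/
noncomputable def LCrad {g ν ℓ : ℕ} (L : Matrix (Fin ν) (Fin ν) (FreePoly g))
    (C : Submodule ℝ (Fin ℓ → FreePoly g))
    (I : Submodule (FreePoly g) (Fin ℓ → FreePoly g)) :
    Submodule (FreePoly g) (Fin ℓ → FreePoly g) :=
  sInf { J | I ≤ J ∧ IsLCReal L C J }

/-- The strong `(L,C)`-real radical of `I`. -/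
noncomputable def LCradStrong {g ν ℓ : ℕ} (L : Matrix (Fin ν) (Fin ν) (FreePoly g))
    (C : Submodule ℝ (Fin ℓ → FreePoly g))
    (I : Submodule (FreePoly g) (Fin ℓ → FreePoly g)) :
    Submodule (FreePoly g) (Fin ℓ → FreePoly g) :=
  sInf { J | I ≤ J ∧ IsLCRealStrong L C J }

/-- The constant term of a noncommutative polynomial. -/
noncomputable def constTerm (g : ℕ) : FreePoly g →ₐ[ℝ] ℝ :=
  FreeAlgebra.lift ℝ (fun _ : Lttr g => (0 : ℝ))

/-- `L` is a linear pencil: symmetric, with entries of degree at most `1`. -/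
def IsPencil {g ν : ℕ} (L : Matrix (Fin ν) (Fin ν) (FreePoly g)) : Prop :=
  starM L = L ∧ ∀ i j, L i j ∈ degLE g 1

/-- `L` is monic: its constant term is the identity matrix. -/
def IsMonic {g ν : ℕ} (L : Matrix (Fin ν) (Fin ν) (FreePoly g)) : Prop :=
  ∀ i j, constTerm g (L i j) = if i = j then 1 else 0

/-- A real matrix viewed as a constant matrix polynomial. -/
noncomputable def constM {g a b : ℕ} (A : Matrix (Fin a) (Fin b) ℝ) :
    Matrix (Fin a) (Fin b) (FreePoly g) :=
  A.map (algebraMap ℝ (FreePoly g))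

/-- `(X, v) ∈ V(I)`: every element of `I` kills `v` at `X`. -/
def inV {g ℓ n : ℕ} (I : Submodule (FreePoly g) (Fin ℓ → FreePoly g))
    (X : Fin g → Matrix (Fin n) (Fin n) ℝ) (v : Fin ℓ × Fin n → ℝ) : Prop :=
  ∀ p ∈ I, (evalRow X p).mulVec v = 0

section AuxBasics

variable {g ν : ℕ}

lemma pstar_algebraMap (r : ℝ) :
    pstar (algebraMap ℝ (FreePoly g) r) = algebraMap ℝ (FreePoly g) r := by
  simp [pstar]

lemma pstar_iota (l : Lttr g) :
    pstar (FreeAlgebra.ι ℝ l) = FreeAlgebra.ι ℝ (Sum.swap l) := by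
  simp [pstar]

lemma pstar_mul (p q : FreePoly g) : pstar (p * q) = pstar q * pstar p := by
  simp [pstar, _root_.map_mul]

lemma pstar_add (p q : FreePoly g) : pstar (p + q) = pstar p + pstar q := by
  simp [pstar, _root_.map_add]

lemma pstar_neg (p : FreePoly g) : pstar (-p) = -pstar p := by
  simp [pstar, _root_.map_neg]

lemma pstar_smul (c : ℝ) (p : FreePoly g) : pstar (c • p) = c • pstar p := by
  simp [pstar, _root_.map_smul]

/-- `pstar` as a linear map. -/
noncomputable def pstarL (g : ℕ) : FreePoly g →ₗ[ℝ] FreePoly g where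
  toFun := pstar
  map_add' := pstar_add
  map_smul' := pstar_smul

/-- Evaluation at a scalar point (both `xᵢ` and `xᵢ*` go to `x i`). -/
noncomputable def scalEval {g : ℕ} (x : Fin g → ℝ) : FreePoly g →ₐ[ℝ] ℝ :=
  FreeAlgebra.lift ℝ (Sum.elim x x)

lemma scalEval_iota (x : Fin g → ℝ) (l : Lttr g) :
    scalEval x (FreeAlgebra.ι ℝ l) = Sum.elim x x l := by
  simp [scalEval]

lemma scalEval_pstar (x : Fin g → ℝ) (p : FreePoly g) :
    scalEval x (pstar p) = scalEval x p := by
  refine FreeAlgebra.induction ℝ _ ?_ ?_ ?_ ?_ p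
  · intro r; rw [pstar_algebraMap]
  · intro l
    rw [pstar_iota, scalEval_iota, scalEval_iota]
    cases l <;> rfl
  · intro a b ha hb
    rw [pstar_mul, _root_.map_mul, _root_.map_mul, ha, hb, mul_comm]
  · intro a b ha hb
    rw [pstar_add, _root_.map_add, _root_.map_add, ha, hb]

/-- Explicit representation of a degree ≤ 1 polynomial by its data `(C, a)`. -/
noncomputable def REP (g : ℕ) : (ℝ × (Lttr g → ℝ)) →ₗ[ℝ] FreePoly g where
  toFun Ca := algebraMap ℝ (FreePoly g) Ca.1 + ∑ l : Lttr g, Ca.2 l • FreeAlgebra.ι ℝ l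
  map_add' a b := by
    simp only [Prod.fst_add, Prod.snd_add, Pi.add_apply, map_add, add_smul,
      Finset.sum_add_distrib]
    abel
  map_smul' c a := by
    simp only [Prod.smul_fst, Prod.smul_snd, Pi.smul_apply, smul_eq_mul, RingHom.id_apply,
      smul_add, Finset.smul_sum, smul_smul]
    congr 1
    rw [_root_.map_mul, Algebra.smul_def]

lemma REP_eval (x : Fin g → ℝ) (C : ℝ) (a : Lttr g → ℝ) :
    scalEval x (REP g (C, a)) = C + ∑ i, (a (Sum.inl i) + a (Sum.inr i)) * x i := by
  have : scalEval x (REP g (C, a))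
      = C + ∑ l : Lttr g, a l * Sum.elim x x l := by
    simp only [REP, LinearMap.coe_mk, AddHom.coe_mk, _root_.map_add, _root_.map_sum, _root_.map_smul,
      AlgHom.commutes, smul_eq_mul, Algebra.algebraMap_self, RingHom.id_apply]
    congr 1
    refine Finset.sum_congr rfl fun l _ => by rw [scalEval_iota]
  rw [this, Fintype.sum_sum_type]
  congr 1
  rw [← Finset.sum_add_distrib]
  exact Finset.sum_congr rfl fun i _ => by simp [add_mul]

lemma pstar_REP (C : ℝ) (a : Lttr g → ℝ) :
    pstar (REP g (C, a)) = REP g (C, fun l => a (Sum.swap l)) := by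
  have hsum : pstar (∑ l : Lttr g, a l • FreeAlgebra.ι ℝ l)
      = ∑ l : Lttr g, a l • FreeAlgebra.ι ℝ (Sum.swap l) := by
    have := map_sum (pstarL g) (fun l : Lttr g => a l • FreeAlgebra.ι ℝ l) Finset.univ
    simp only [pstarL, LinearMap.coe_mk, AddHom.coe_mk] at this
    rw [this]
    exact Finset.sum_congr rfl fun l _ => by rw [pstar_smul, pstar_iota]
  simp only [REP, LinearMap.coe_mk, AddHom.coe_mk, pstar_add, pstar_algebraMap, hsum]
  congr 1
  refine Fintype.sum_equiv (Equiv.sumComm (Fin g) (Fin g)) _ _ fun l => ?_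
  simp [Equiv.sumComm_apply, Sum.swap_swap]

lemma REPR {p : FreePoly g} (hp : p ∈ degLE g 1) : ∃ Ca : ℝ × (Lttr g → ℝ), p = REP g Ca := by
  refine Submodule.span_induction ?_ ?_ ?_ ?_ hp
  · rintro q ⟨w, hw, rfl⟩
    match w, hw with
    | [], _ =>
      refine ⟨(1, 0), ?_⟩
      simp [fword, REP]
    | [l], _ =>
      refine ⟨(0, fun l' => if l' = l then 1 else 0), ?_⟩
      simp only [fword, List.map_cons, List.map_nil, List.prod_cons, List.prod_nil, mul_one,
        REP, LinearMap.coe_mk, AddHom.coe_mk, map_zero, zero_add, ite_smul, one_smul, zero_smul,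
        Finset.sum_ite_eq', Finset.mem_univ, if_true]
    | (l₁ :: l₂ :: w'), h => exact absurd h (by simp)
  · exact ⟨(0, 0), by simp [REP]⟩
  · rintro p q _ _ ⟨Ca, rfl⟩ ⟨Cb, rfl⟩
    exact ⟨Ca + Cb, (_root_.map_add _ _ _).symm⟩
  · rintro c p _ ⟨Ca, rfl⟩
    exact ⟨c • Ca, (_root_.map_smul _ _ _).symm⟩

lemma REP_cancel (C : ℝ) (a : Lttr g → ℝ)
    (h : ∀ x : Fin g → ℝ, scalEval x (REP g (C, a)) = 0) :
    REP g (C, a) + pstar (REP g (C, a)) = 0 := by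
  have hC : C = 0 := by simpa [REP_eval] using h 0
  have hii : ∀ i, a (Sum.inl i) + a (Sum.inr i) = 0 := by
    intro i
    have h2 := h (fun j => if j = i then 1 else 0)
    rw [REP_eval, hC] at h2
    simpa [mul_ite, Finset.sum_ite_eq'] using h2
  rw [pstar_REP, ← _root_.map_add]
  have h3 : ((C, a) + (C, fun l => a (Sum.swap l))) = ((0 : ℝ), (0 : Lttr g → ℝ)) := by
    refine Prod.ext ?_ ?_
    · show C + C = 0; rw [hC]; ring
    · funext l
      show a l + a (Sum.swap l) = 0
      cases l with
      | inl i => exact hii i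
      | inr i => simpa [add_comm] using hii i
  rw [h3]
  exact _root_.map_zero _

lemma evalP_scalar (x : Fin g → ℝ) (p : FreePoly g) :
    evalP (fun i => Matrix.of fun _ _ : Fin 1 => x i) p 0 0 = scalEval x p := by
  refine FreeAlgebra.induction ℝ _ ?_ ?_ ?_ ?_ p
  · intro r
    rw [AlgHom.commutes, AlgHom.commutes]
    simp [Matrix.algebraMap_matrix_apply]
  · intro l
    have h1 : evalP (fun i => Matrix.of fun _ _ : Fin 1 => x i) (FreeAlgebra.ι ℝ l)
        = Sum.elim (fun i => Matrix.of fun _ _ : Fin 1 => x i)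
            (fun i => (Matrix.of fun _ _ : Fin 1 => x i)ᵀ) l := by
      simp [evalP]
    rw [h1, scalEval_iota]
    cases l <;> simp
  · intro a b ha hb
    rw [_root_.map_mul, _root_.map_mul, Matrix.mul_apply]
    rw [Fin.sum_univ_one, ha, hb]
  · intro a b ha hb
    rw [_root_.map_add, _root_.map_add, Matrix.add_apply, ha, hb]

end AuxBasics

section AuxEval

variable {g ν : ℕ}

/-- The scalar evaluation of a matrix pencil. -/
noncomputable def Lam (L : Matrix (Fin ν) (Fin ν) (FreePoly g)) (x : Fin g → ℝ) :
    Matrix (Fin ν) (Fin ν) ℝ :=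
  Matrix.of fun i j => scalEval x (L i j)

lemma Lam_apply (L : Matrix (Fin ν) (Fin ν) (FreePoly g)) (x : Fin g → ℝ) (i j : Fin ν) :
    Lam L x i j = scalEval x (L i j) := rfl

lemma pencil_pstar {L : Matrix (Fin ν) (Fin ν) (FreePoly g)} (hL : IsPencil L) (i j : Fin ν) :
    pstar (L i j) = L j i := by
  have := congrFun (congrFun hL.1 j) i
  exact this

lemma Lam_symm {L : Matrix (Fin ν) (Fin ν) (FreePoly g)} (hL : IsPencil L) (x : Fin g → ℝ)
    (i j : Fin ν) : Lam L x j i = Lam L x i j := by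
  rw [Lam_apply, Lam_apply, ← pencil_pstar hL i j, scalEval_pstar]

lemma Lam_isHermitian {L : Matrix (Fin ν) (Fin ν) (FreePoly g)} (hL : IsPencil L)
    (x : Fin g → ℝ) : (Lam L x).IsHermitian := by
  show (Lam L x)ᴴ = Lam L x
  refine Matrix.ext fun i j => ?_
  rw [Matrix.conjTranspose_apply]
  show star (Lam L x j i) = Lam L x i j
  rw [star_trivial]
  exact Lam_symm hL x i j

lemma star_vec_trivial {n : Type*} (v : n → ℝ) : star v = v := by
  funext k; simp

/-- Collapsing a quadratic form over `Fin ν × Fin n` with an indicator vector. -/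
lemma quad_indicator {n : ℕ} (N : Matrix (Fin ν × Fin n) (Fin ν × Fin n) ℝ) (z : Fin n)
    (v : Fin ν → ℝ) :
    (fun p : Fin ν × Fin n => if p.2 = z then v p.1 else 0) ⬝ᵥ
        N *ᵥ (fun p : Fin ν × Fin n => if p.2 = z then v p.1 else 0)
      = v ⬝ᵥ (Matrix.of fun i j => N (i, z) (j, z)) *ᵥ v := by
  simp only [dotProduct, Matrix.mulVec, Matrix.of_apply, Fintype.sum_prod_type,
    mul_ite, mul_zero, ite_mul, zero_mul, Finset.sum_ite_eq', Finset.mem_univ, if_true]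

lemma evalM_scalar_apply (L : Matrix (Fin ν) (Fin ν) (FreePoly g)) (x : Fin g → ℝ)
    (i j : Fin ν) (a b : Fin 1) :
    evalM (fun i => Matrix.of fun _ _ : Fin 1 => x i) L (i, a) (j, b) = Lam L x i j := by
  have ha : a = 0 := Subsingleton.elim _ _
  have hb : b = 0 := Subsingleton.elim _ _
  subst ha; subst hb
  exact evalP_scalar x (L i j)

lemma bridge {L : Matrix (Fin ν) (Fin ν) (FreePoly g)} (hL : IsPencil L) (x : Fin g → ℝ) :
    (evalM (fun i => Matrix.of fun _ _ : Fin 1 => x i) L).PosSemidef ↔ (Lam L x).PosSemidef := by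
  set N := evalM (fun i => Matrix.of fun _ _ : Fin 1 => x i) L with hN
  have hentry : ∀ i j (a b : Fin 1), N (i, a) (j, b) = Lam L x i j := fun i j a b =>
    evalM_scalar_apply L x i j a b
  have hMat : (Matrix.of fun i j => N (i, (0 : Fin 1)) (j, (0 : Fin 1))) = Lam L x :=
    Matrix.ext fun i j => hentry i j 0 0
  constructor
  · intro h
    refine .of_dotProduct_mulVec_nonneg (Lam_isHermitian hL x) fun v => ?_
    have h2 := h.dotProduct_mulVec_nonneg (fun p : Fin ν × Fin 1 => if p.2 = 0 then v p.1 else 0)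
    rw [star_vec_trivial, quad_indicator, hMat] at h2
    rwa [star_vec_trivial]
  · intro h
    refine .of_dotProduct_mulVec_nonneg ?_ ?_
    · show Nᴴ = N
      refine Matrix.ext fun p q => ?_
      rw [Matrix.conjTranspose_apply, star_trivial]
      obtain ⟨i, a⟩ := p; obtain ⟨j, b⟩ := q
      rw [hentry, hentry]
      exact Lam_symm hL x i j
    · intro v'
      set v : Fin ν → ℝ := fun k => v' (k, 0) with hvdef
      have hv : v' = (fun p : Fin ν × Fin 1 => if p.2 = 0 then v p.1 else 0) := by
        funext p
        rw [if_pos (Subsingleton.elim p.2 0)]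
        show v' p = v' (p.1, 0)
        congr 1
        exact Prod.ext rfl (Subsingleton.elim _ _)
      rw [star_vec_trivial, hv, quad_indicator, hMat]
      have h2 := h.dotProduct_mulVec_nonneg v
      rwa [star_vec_trivial] at h2

lemma psd_sqrt_aux {m : ℕ} {D : Matrix (Fin m) (Fin m) ℝ} (hD : D.PosSemidef) :
    ∃ S : Matrix (Fin m) (Fin m) ℝ, S * S = D ∧ S.IsHermitian := by
  open scoped MatrixOrder in
  exact ⟨CFC.sqrt D, CFC.sqrt_mul_sqrt_self D hD.nonneg, (CFC.sqrt_nonneg D).posSemidef.1⟩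

lemma psd_quad_zero {M : Matrix (Fin ν) (Fin ν) ℝ} (hM : M.PosSemidef) {w : Fin ν → ℝ}
    (h : w ⬝ᵥ M *ᵥ w = 0) : M *ᵥ w = 0 := by
  obtain ⟨S, hSS, hherm⟩ := psd_sqrt_aux hM
  have hT : Sᵀ = S := by
    refine Matrix.ext fun i j => ?_
    rw [Matrix.transpose_apply]
    have h5 := hherm.apply j i
    rw [star_trivial] at h5
    exact h5.symm
  have h1 : (S *ᵥ w) ⬝ᵥ (S *ᵥ w) = 0 := by
    have e1 : w ⬝ᵥ M *ᵥ w = (S *ᵥ w) ⬝ᵥ (S *ᵥ w) := by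
      rw [← hSS, ← Matrix.mulVec_mulVec, dotProduct_mulVec]
      congr 1
      rw [← hT, Matrix.vecMul_transpose, hT]
    rw [← e1, h]
  have h2 : S *ᵥ w = 0 := dotProduct_self_eq_zero.mp h1
  rw [← hSS, ← Matrix.mulVec_mulVec, h2, Matrix.mulVec_zero]

/-- The kernel of evaluation at a scalar point, as a left submodule. -/
noncomputable def Jev (x : Fin g → ℝ) : Submodule (FreePoly g) (Fin 1 → FreePoly g) where
  carrier := {p | scalEval x (p 0) = 0}
  add_mem' := by
    intro p q hp hq
    show scalEval x ((p + q) 0) = 0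
    rw [Pi.add_apply, _root_.map_add]
    rw [Set.mem_setOf_eq] at hp hq
    rw [hp, hq, add_zero]
  zero_mem' := by
    show scalEval x ((0 : Fin 1 → FreePoly g) 0) = 0
    simp
  smul_mem' := by
    intro c p hp
    show scalEval x ((c • p) 0) = 0
    rw [Set.mem_setOf_eq] at hp
    rw [Pi.smul_apply, smul_eq_mul, _root_.map_mul, hp, mul_zero]

lemma mem_Jev {x : Fin g → ℝ} {p : Fin 1 → FreePoly g} :
    p ∈ Jev x ↔ scalEval x (p 0) = 0 := Iff.rfl

lemma Jev_isLReal {L : Matrix (Fin ν) (Fin ν) (FreePoly g)} (hL : IsPencil L)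
    {x : Fin g → ℝ} (hx : (Lam L x).PosSemidef) : IsLReal L (Jev x) := by
  intro a b p q hmem
  obtain ⟨u, v, hu, hv, heq⟩ := hmem
  have heval := congrArg (fun M : Matrix (Fin 1) (Fin 1) (FreePoly g) => scalEval x (M 0 0)) heq
  have hR : scalEval x ((u + starM v) 0 0) = 0 := by
    have h1 : scalEval x (u 0 0) = 0 := hu 0
    have h2 : scalEval x ((starM v) 0 0) = 0 := by
      show scalEval x (pstar (v 0 0)) = 0
      rw [scalEval_pstar]
      exact hv 0
    rw [Matrix.add_apply, _root_.map_add, h1, h2, add_zero]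
  set w : Fin b → Fin ν → ℝ := fun j k => scalEval x (q j k 0) with hw
  have hLHS : scalEval x (((∑ i, sqForm (p i)) + ∑ j, quadForm L (q j)) 0 0)
      = (∑ i, (scalEval x (p i 0))^2) + ∑ j, (w j) ⬝ᵥ (Lam L x) *ᵥ (w j) := by
    rw [Matrix.add_apply, _root_.map_add, Matrix.sum_apply, Matrix.sum_apply,
      _root_.map_sum, _root_.map_sum]
    congr 1
    · refine Finset.sum_congr rfl fun i _ => ?_
      show scalEval x (pstar (p i 0) * p i 0) = _
      rw [_root_.map_mul, scalEval_pstar]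
      ring
    · refine Finset.sum_congr rfl fun j _ => ?_
      show scalEval x ((starM (q j) * L * q j) 0 0) = _
      simp only [Matrix.mul_apply, _root_.map_sum, _root_.map_mul, starM, scalEval_pstar,
        dotProduct, Matrix.mulVec, Lam, Matrix.of_apply, hw, Finset.sum_mul,
        Finset.mul_sum]
      rw [Finset.sum_comm]
      refine Finset.sum_congr rfl fun k _ => ?_
      refine Finset.sum_congr rfl fun k' _ => ?_
      ring
  have hz : (∑ i, (scalEval x (p i 0))^2) + ∑ j, (w j) ⬝ᵥ (Lam L x) *ᵥ (w j) = 0 := by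
    rw [← hLHS, heval]; exact hR
  have hsq : ∀ i ∈ Finset.univ, (0:ℝ) ≤ (scalEval x (p i 0))^2 := fun i _ => sq_nonneg _
  have hqd : ∀ j ∈ Finset.univ, (0:ℝ) ≤ (w j) ⬝ᵥ (Lam L x) *ᵥ (w j) := by
    intro j _
    have := hx.dotProduct_mulVec_nonneg (w j)
    rwa [star_vec_trivial] at this
  have hsum1 : (∑ i, (scalEval x (p i 0))^2) = 0 ∧ (∑ j, (w j) ⬝ᵥ (Lam L x) *ᵥ (w j)) = 0 := by
    constructor
    · have hle := Finset.sum_nonneg hqd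
      have hge := Finset.sum_nonneg hsq
      linarith
    · have hle := Finset.sum_nonneg hqd
      have hge := Finset.sum_nonneg hsq
      linarith
  constructor
  · intro i
    rw [mem_Jev]
    have := (Finset.sum_eq_zero_iff_of_nonneg hsq).mp hsum1.1 i (Finset.mem_univ i)
    exact pow_eq_zero_iff (n := 2) (by norm_num) |>.mp this
  · intro j k
    rw [mem_Jev]
    have hquad : (w j) ⬝ᵥ (Lam L x) *ᵥ (w j) = 0 :=
      (Finset.sum_eq_zero_iff_of_nonneg hqd).mp hsum1.2 j (Finset.mem_univ j)
    have hker : (Lam L x) *ᵥ (w j) = 0 := psd_quad_zero hx hquad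
    show scalEval x ((L * q j) k 0) = 0
    have : scalEval x ((L * q j) k 0) = ((Lam L x) *ᵥ (w j)) k := by
      rw [Matrix.mul_apply, _root_.map_sum]
      show _ = ∑ k', Lam L x k k' * w j k'
      refine Finset.sum_congr rfl fun k' _ => ?_
      rw [_root_.map_mul, Lam_apply]
    rw [this, hker]
    rfl

end AuxEval

section AuxCompress

variable {g ν : ℕ}

lemma compress {n : ℕ} (hn : 0 < n) {L : Matrix (Fin ν) (Fin ν) (FreePoly g)} (hL : IsPencil L)
    {X : Fin g → Matrix (Fin n) (Fin n) ℝ} (hX : (evalM X L).PosSemidef) :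
    (Lam L (fun i => X i ⟨0, hn⟩ ⟨0, hn⟩)).PosSemidef := by
  set z : Fin n := ⟨0, hn⟩ with hz
  set x : Fin g → ℝ := fun i => X i z z with hxdef
  have key : ∀ p ∈ degLE g 1, evalP X p z z = scalEval x p := by
    intro p hp
    obtain ⟨⟨C, a⟩, rfl⟩ := REPR hp
    rw [REP_eval]
    show evalP X ((algebraMap ℝ (FreePoly g)) C + ∑ l : Lttr g, a l • FreeAlgebra.ι ℝ l) z z = _
    rw [_root_.map_add, _root_.map_sum]
    have h1 : (evalP X) ((algebraMap ℝ (FreePoly g)) C) z z = C := by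
      rw [AlgHom.commutes]
      simp [Matrix.algebraMap_matrix_apply]
    have h2 : ∀ l : Lttr g, (evalP X) (a l • FreeAlgebra.ι ℝ l) z z
        = a l * x (Sum.elim id id l) := by
      intro l
      rw [_root_.map_smul]
      have he : (evalP X) (FreeAlgebra.ι ℝ l) = Sum.elim X (fun i => (X i)ᵀ) l := by
        simp [evalP]
      rw [Matrix.smul_apply, he, smul_eq_mul]
      cases l with
      | inl i => rfl
      | inr i =>
        show a _ * (X i)ᵀ z z = _
        rw [Matrix.transpose_apply]
        rfl
    rw [Matrix.add_apply, Matrix.sum_apply, h1]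
    have h3 : ∑ l : Lttr g, (evalP X) (a l • FreeAlgebra.ι ℝ l) z z
        = ∑ l : Lttr g, a l * x (Sum.elim id id l) := Finset.sum_congr rfl fun l _ => h2 l
    rw [h3, Fintype.sum_sum_type]
    congr 1
    rw [← Finset.sum_add_distrib]
    exact Finset.sum_congr rfl fun i _ => by simp [add_mul]
  refine .of_dotProduct_mulVec_nonneg (Lam_isHermitian hL x) fun v => ?_
  rw [star_vec_trivial]
  have h2 := hX.dotProduct_mulVec_nonneg (fun p : Fin ν × Fin n => if p.2 = z then v p.1 else 0)
  rw [star_vec_trivial, quad_indicator] at h2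
  have hMat : (Matrix.of fun i j => (evalM X L) (i, z) (j, z)) = Lam L x := by
    refine Matrix.ext fun i j => ?_
    show evalP X (L i j) z z = Lam L x i j
    rw [key (L i j) (hL.2 i j), Lam_apply]
  rwa [hMat] at h2

lemma part2_iff {L : Matrix (Fin ν) (Fin ν) (FreePoly g)} (hL : IsPencil L) :
    (¬∃ x : Fin g → ℝ,
        (evalM (fun i => Matrix.of fun _ _ : Fin 1 => x i) L).PosSemidef) ↔
      ∀ n : ℕ, 0 < n →
        ¬∃ X : Fin g → Matrix (Fin n) (Fin n) ℝ, (evalM X L).PosSemidef := by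
  constructor
  · rintro h n hn ⟨X, hX⟩
    exact h ⟨_, (bridge hL _).mpr (compress hn hL hX)⟩
  · rintro h ⟨x, hx⟩
    exact (h 1 one_pos) ⟨_, hx⟩

end AuxCompress

section LinAlgAux

variable {g : ℕ}

lemma euclid_sum_apply {κ : Type*} {ι : Type*} [Fintype ι] (s : Finset κ)
    (f : κ → EuclideanSpace ℝ ι) (i : ι) : (∑ j ∈ s, f j) i = ∑ j ∈ s, f j i := by
  induction s using Finset.cons_induction with
  | empty => rfl
  | cons a s ha ih => rw [Finset.sum_cons, Finset.sum_cons, ← ih]; rfl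

lemma euclid_inner {ι : Type*} [Fintype ι] (u w : EuclideanSpace ℝ ι) :
    (inner ℝ u w : ℝ) = ∑ i, u i * w i := by
  simp [PiLp.inner_apply, RCLike.inner_apply, mul_comm]

/-- Farkas lemma for an inconsistent system of affine equations. -/
lemma LA1 {κ : Type*} [Fintype κ] (hc : κ → ℝ) (hv : κ → Fin g → ℝ)
    (hne : ¬∃ x : Fin g → ℝ, ∀ j, hc j + ∑ i, hv j i * x i = 0) :
    ∃ y : κ → ℝ, (∀ i, ∑ j, y j * hv j i = 0) ∧ ∑ j, y j * hc j = 1 := by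
  classical
  set Φ : (Fin g → ℝ) →ₗ[ℝ] EuclideanSpace ℝ κ :=
    { toFun := fun x => (WithLp.toLp 2 (fun j => ∑ i, hv j i * x i) : EuclideanSpace ℝ κ)
      map_add' := by
        intro x x'
        ext j
        show ∑ i, hv j i * (x i + x' i) = (fun j => ∑ i, hv j i * x i) j
          + (fun j => ∑ i, hv j i * x' i) j
        simp [mul_add, Finset.sum_add_distrib]
      map_smul' := by
        intro c x
        ext j
        show ∑ i, hv j i * (c * x i) = c * ∑ i, hv j i * x i
        rw [Finset.mul_sum]
        exact Finset.sum_congr rfl fun i _ => by ring } with hPhi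
  set S := LinearMap.range Φ with hS
  set bvec : EuclideanSpace ℝ κ := WithLp.toLp 2 (fun j => - hc j) with hb
  have hbS : bvec ∉ S := by
    rintro ⟨x, hxe⟩
    refine hne ⟨x, fun j => ?_⟩
    have h1 := congrFun (congrArg WithLp.ofLp hxe) j
    show hc j + ∑ i, hv j i * x i = 0
    have h2 : (∑ i, hv j i * x i) = - hc j := h1
    rw [h2]; ring
  set y0 : EuclideanSpace ℝ κ := bvec - (S.orthogonalProjectionOnto bvec : EuclideanSpace ℝ κ)
    with hy0
  have hy0o : y0 ∈ Sᗮ := Submodule.sub_starProjection_mem_orthogonal bvec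
  have hy0ne : y0 ≠ 0 := by
    intro h0
    apply hbS
    have h1 : bvec = (S.orthogonalProjectionOnto bvec : EuclideanSpace ℝ κ) := by
      rw [hy0] at h0; rwa [sub_eq_zero] at h0
    rw [h1]
    exact Submodule.coe_mem _
  set τ : ℝ := ‖y0‖^2 with hτdef
  have hτ : 0 < τ := by
    rw [hτdef]
    have := norm_pos_iff.mpr hy0ne
    positivity
  have hinner : (inner ℝ y0 bvec : ℝ) = τ := by
    have h1 : bvec = y0 + (S.orthogonalProjectionOnto bvec : EuclideanSpace ℝ κ) := by
      rw [hy0]; abel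
    rw [h1, inner_add_right]
    have hz : (inner ℝ y0 ((S.orthogonalProjectionOnto bvec : EuclideanSpace ℝ κ)) : ℝ) = 0 := by
      have hm : ((S.orthogonalProjectionOnto bvec : EuclideanSpace ℝ κ)) ∈ S :=
        Submodule.coe_mem _
      have h3 := (Submodule.mem_orthogonal S y0).mp hy0o _ hm
      rwa [real_inner_comm] at h3
    rw [hz, add_zero, real_inner_self_eq_norm_sq]
  refine ⟨fun j => - y0 j / τ, ?_, ?_⟩
  · intro i
    have hcoord : ∑ j, y0 j * hv j i = 0 := by
      have hm : Φ (fun i' => if i' = i then 1 else 0) ∈ S := LinearMap.mem_range_self _ _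
      have h4 := (Submodule.mem_orthogonal S y0).mp hy0o _ hm
      rw [euclid_inner] at h4
      have h5 : ∀ j, Φ (fun i' => if i' = i then 1 else 0) j = hv j i := by
        intro j
        show (∑ i', hv j i' * if i' = i then (1:ℝ) else 0) = hv j i
        simp [mul_ite, Finset.sum_ite_eq']
      rw [Finset.sum_congr rfl (fun j _ => by rw [h5 j])] at h4
      rw [← h4]
      exact Finset.sum_congr rfl fun j _ => by ring
    have : ∑ j, (- y0 j / τ) * hv j i = (-1/τ) * ∑ j, y0 j * hv j i := by
      rw [Finset.mul_sum]
      exact Finset.sum_congr rfl fun j _ => by ring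
    rw [this, hcoord, mul_zero]
  · have h6 : (inner ℝ y0 bvec : ℝ) = ∑ j, y0 j * (- hc j) := euclid_inner _ _
    have h7 : ∑ j, y0 j * (- hc j) = τ := by rw [← h6, hinner]
    have : ∑ j, (- y0 j / τ) * hc j = (1/τ) * ∑ j, y0 j * (- hc j) := by
      rw [Finset.mul_sum]
      exact Finset.sum_congr rfl fun j _ => by ring
    rw [this, h7]
    field_simp

/-- An affine function vanishing on the (nonempty) zero set of an affine family is a
linear combination of the family. -/
lemma LA2 {κ : Type*} [Fintype κ] (hc : κ → ℝ) (hv : κ → Fin g → ℝ)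
    (x₀ : Fin g → ℝ) (hx₀ : ∀ j, hc j + ∑ i, hv j i * x₀ i = 0)
    (C₀ : ℝ) (v₀ : Fin g → ℝ)
    (hvan : ∀ x : Fin g → ℝ, (∀ j, hc j + ∑ i, hv j i * x i = 0) →
      C₀ + ∑ i, v₀ i * x i = 0) :
    ∃ y : κ → ℝ, (∀ i, v₀ i = ∑ j, y j * hv j i) ∧ C₀ = ∑ j, y j * hc j := by
  classical
  set hv' : κ → EuclideanSpace ℝ (Fin g) := fun j => WithLp.toLp 2 (hv j) with hhv
  set v₀' : EuclideanSpace ℝ (Fin g) := WithLp.toLp 2 v₀ with hv0'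
  set S := Submodule.span ℝ (Set.range hv') with hS
  have hmem : v₀' ∈ S := by
    rw [← Submodule.orthogonal_orthogonal S]
    rw [Submodule.mem_orthogonal]
    intro u hu
    have hperp : ∀ j, ∑ i, hv j i * u i = 0 := by
      intro j
      have hj : hv' j ∈ S := Submodule.subset_span ⟨j, rfl⟩
      have h3 := (Submodule.mem_orthogonal S u).mp hu _ hj
      rw [euclid_inner] at h3
      exact h3
    have h1 := hvan (fun i => x₀ i + u i) (fun j => by
      have h2 := hx₀ j
      have h3 : ∑ i, hv j i * (x₀ i + u i) = (∑ i, hv j i * x₀ i) + ∑ i, hv j i * u i := by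
        rw [← Finset.sum_add_distrib]
        exact Finset.sum_congr rfl fun i _ => by ring
      rw [h3, hperp j, add_zero]
      exact h2)
    have h2 := hvan x₀ hx₀
    have h4 : ∑ i, v₀ i * (x₀ i + u i) = (∑ i, v₀ i * x₀ i) + ∑ i, v₀ i * u i := by
      rw [← Finset.sum_add_distrib]
      exact Finset.sum_congr rfl fun i _ => by ring
    rw [h4] at h1
    have h5 : ∑ i, v₀ i * u i = 0 := by linarith
    rw [euclid_inner]
    rw [← h5]
    exact Finset.sum_congr rfl fun i _ => by ring
  obtain ⟨y, hy⟩ := (Submodule.mem_span_range_iff_exists_fun ℝ).mp hmem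
  refine ⟨y, ?_, ?_⟩
  · intro i
    have h1 := congrFun (congrArg WithLp.ofLp hy) i
    have h2 : (∑ j, y j • hv' j) i = ∑ j, y j * hv j i := by
      rw [euclid_sum_apply]
      exact Finset.sum_congr rfl fun j _ => rfl
    rw [h2] at h1
    exact h1.symm
  · have h2 := hvan x₀ hx₀
    have hv0 : ∀ i, v₀ i = ∑ j, y j * hv j i := by
      intro i
      have h1 := congrFun (congrArg WithLp.ofLp hy) i
      have h3 : (∑ j, y j • hv' j) i = ∑ j, y j * hv j i := by
        rw [euclid_sum_apply]
        exact Finset.sum_congr rfl fun j _ => rfl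
      rw [h3] at h1
      exact h1.symm
    have h8 : ∑ i, v₀ i * x₀ i = ∑ j, y j * (∑ i, hv j i * x₀ i) := by
      calc ∑ i, v₀ i * x₀ i = ∑ i, (∑ j, y j * hv j i) * x₀ i :=
            Finset.sum_congr rfl fun i _ => by rw [← hv0 i]
        _ = ∑ i, ∑ j, y j * hv j i * x₀ i :=
            Finset.sum_congr rfl fun i _ => by rw [Finset.sum_mul]
        _ = ∑ j, ∑ i, y j * hv j i * x₀ i := Finset.sum_comm
        _ = ∑ j, y j * (∑ i, hv j i * x₀ i) := by
            refine Finset.sum_congr rfl fun j _ => ?_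
            rw [Finset.mul_sum]
            exact Finset.sum_congr rfl fun i _ => by ring
    have h9 : ∀ j, (∑ i, hv j i * x₀ i) = - hc j := fun j => by
      have := hx₀ j; linarith
    have h10 : ∑ i, v₀ i * x₀ i = - ∑ j, y j * hc j := by
      rw [h8]
      rw [Finset.sum_congr rfl (fun j _ => by rw [h9 j])]
      rw [← Finset.sum_neg_distrib]
      exact Finset.sum_congr rfl fun j _ => by ring
    linarith

end LinAlgAux

section Separation

/-- Quadratic form associated to a point of `EuclideanSpace ℝ (Fin m × Fin m)`. -/
def Qf {m : ℕ} (v : Fin m → ℝ) (A : EuclideanSpace ℝ (Fin m × Fin m)) : ℝ :=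
  ∑ k, ∑ k', v k * A (k, k') * v k'

lemma Qf_add {m : ℕ} (v : Fin m → ℝ) (A B : EuclideanSpace ℝ (Fin m × Fin m)) :
    Qf v (A + B) = Qf v A + Qf v B := by
  simp only [Qf, ← Finset.sum_add_distrib]
  refine Finset.sum_congr rfl fun k _ => Finset.sum_congr rfl fun k' _ => ?_
  have : (A + B) (k, k') = A (k, k') + B (k, k') := rfl
  rw [this]; ring

lemma Qf_smul {m : ℕ} (c : ℝ) (v : Fin m → ℝ) (A : EuclideanSpace ℝ (Fin m × Fin m)) :
    Qf v (c • A) = c * Qf v A := by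
  simp only [Qf, Finset.mul_sum]
  refine Finset.sum_congr rfl fun k _ => Finset.sum_congr rfl fun k' _ => ?_
  have : (c • A) (k, k') = c * A (k, k') := rfl
  rw [this]; ring

lemma Qf_smul_left {m : ℕ} (c : ℝ) (v : Fin m → ℝ) (A : EuclideanSpace ℝ (Fin m × Fin m)) :
    Qf (fun k => c * v k) A = c^2 * Qf v A := by
  simp only [Qf, Finset.mul_sum]
  refine Finset.sum_congr rfl fun k _ => Finset.sum_congr rfl fun k' _ => ?_
  ring

lemma slope_zero_lower {a b u : ℝ} (h : ∀ t : ℝ, u ≤ a + t * b) : b = 0 := by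
  by_contra hb
  have h1 := h ((u - a - 1)/b)
  rw [div_mul_cancel₀ _ hb] at h1
  linarith

lemma separation {m : ℕ} (W : Set (EuclideanSpace ℝ (Fin m × Fin m)))
    (hWne : W.Nonempty)
    (hWline : ∀ A ∈ W, ∀ B ∈ W, ∀ t : ℝ, A + t • (B - A) ∈ W)
    (hWsym : ∀ A ∈ W, ∀ k k' : Fin m, A (k, k') = A (k', k))
    (hdisj : ∀ A ∈ W, ¬ (∀ v : Fin m → ℝ, v ≠ 0 → 0 < Qf v A)) :
    ∃ (D : Matrix (Fin m) (Fin m) ℝ) (β : ℝ), D.PosSemidef ∧ D ≠ 0 ∧ β ≤ 0 ∧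
      ∀ A ∈ W, (∑ k, ∑ k', D k k' * A (k, k')) = β := by
  classical
  set sPD : Set (EuclideanSpace ℝ (Fin m × Fin m)) := {A | ∀ v : Fin m → ℝ, v ≠ 0 → 0 < Qf v A} with hsPD
  -- convexity of sPD
  have hconv : Convex ℝ sPD := by
    intro A hA B hB a b ha hb hab
    intro v hv
    have hq : Qf v (a • A + b • B) = a * Qf v A + b * Qf v B := by
      rw [Qf_add, Qf_smul, Qf_smul]
    rw [hq]
    rcases eq_or_lt_of_le ha with ha0 | ha0
    · have hb1 : b = 1 := by linarith
      rw [← ha0, hb1]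
      simpa using hB v hv
    · exact add_pos_of_pos_of_nonneg (mul_pos ha0 (hA v hv))
        (mul_nonneg hb (le_of_lt (hB v hv)))
  -- openness of sPD
  have hopen : IsOpen sPD := by
    rw [← isClosed_compl_iff]
    have himg : sPDᶜ = Prod.snd ''
        {va : Metric.sphere (0 : EuclideanSpace ℝ (Fin m)) 1 × (EuclideanSpace ℝ (Fin m × Fin m)) |
          Qf (va.1 : EuclideanSpace ℝ (Fin m)) va.2 ≤ 0} := by
      ext A
      simp only [Set.mem_compl_iff, Set.mem_image, Set.mem_setOf_eq]
      constructor
      · intro hA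
        have hA' : ∃ v : Fin m → ℝ, v ≠ 0 ∧ Qf v A ≤ 0 := by
          by_contra hcon
          push_neg at hcon
          exact hA (fun v hv => hcon v hv)
        obtain ⟨v, hv, hQ⟩ := hA'
        set w : EuclideanSpace ℝ (Fin m) := WithLp.toLp 2 v with hwdef
        have hw0 : w ≠ 0 := by simpa [hwdef] using hv
        have hnorm : ‖(‖w‖⁻¹ • w : EuclideanSpace ℝ (Fin m))‖ = 1 := by
          rw [norm_smul, norm_inv, norm_norm]
          field_simp [norm_ne_zero_iff.mpr hw0]
        refine ⟨(⟨‖w‖⁻¹ • w, ?_⟩, A), ?_, rfl⟩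
        · rwa [mem_sphere_zero_iff_norm]
        · show Qf ((‖w‖⁻¹ • w : EuclideanSpace ℝ (Fin m)) : Fin m → ℝ) A ≤ 0
          have hco : ((‖w‖⁻¹ • w : EuclideanSpace ℝ (Fin m)) : Fin m → ℝ)
              = fun k => ‖w‖⁻¹ * v k := rfl
          rw [hco, Qf_smul_left]
          exact mul_nonpos_of_nonneg_of_nonpos (sq_nonneg _) hQ
      · rintro ⟨⟨⟨w, hw⟩, A'⟩, hQ, rfl⟩
        intro hmem
        have hw1 : ‖w‖ = 1 := by rwa [← mem_sphere_zero_iff_norm]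
        have hw0 : (w : Fin m → ℝ) ≠ 0 := by
          intro h0
          have : w = 0 := by simpa using h0
          rw [this] at hw1
          simp at hw1
        exact absurd (hmem w hw0) (not_lt.mpr hQ)
    rw [himg]
    refine isClosedMap_snd_of_compactSpace _ ?_
    have hcont : Continuous fun va : Metric.sphere (0 : EuclideanSpace ℝ (Fin m)) 1 × (EuclideanSpace ℝ (Fin m × Fin m)) =>
        Qf (va.1 : EuclideanSpace ℝ (Fin m)) va.2 := by
      unfold Qf
      refine continuous_finset_sum _ fun k _ => continuous_finset_sum _ fun k' _ => ?_
      have h1 : Continuous fun va : Metric.sphere (0 : EuclideanSpace ℝ (Fin m)) 1 × (EuclideanSpace ℝ (Fin m × Fin m)) =>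
          (va.1 : EuclideanSpace ℝ (Fin m)) k :=
        (EuclideanSpace.proj k).continuous.comp (continuous_subtype_val.comp continuous_fst)
      have h1' : Continuous fun va : Metric.sphere (0 : EuclideanSpace ℝ (Fin m)) 1 × (EuclideanSpace ℝ (Fin m × Fin m)) =>
          (va.1 : EuclideanSpace ℝ (Fin m)) k' :=
        (EuclideanSpace.proj k').continuous.comp (continuous_subtype_val.comp continuous_fst)
      have h2 : Continuous fun va : Metric.sphere (0 : EuclideanSpace ℝ (Fin m)) 1 × (EuclideanSpace ℝ (Fin m × Fin m)) =>
          va.2 (k, k') :=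
        (EuclideanSpace.proj (k, k')).continuous.comp continuous_snd
      exact (h1.mul h2).mul h1'
    exact (isClosed_Iic.preimage hcont)
  -- convexity of W
  have hWconv : Convex ℝ W := by
    intro A hA B hB a b ha hb hab
    have hl := hWline A hA B hB b
    have heq : A + b • (B - A) = a • A + b • B := by
      have hab' : a = 1 - b := by linarith
      rw [hab', sub_smul, one_smul, smul_sub]
      abel
    rwa [heq] at hl
  -- the identity-like element
  set Iid : (EuclideanSpace ℝ (Fin m × Fin m)) := WithLp.toLp 2 (fun p : Fin m × Fin m => if p.1 = p.2 then (1:ℝ) else 0) with hIid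
  have hQI : ∀ v : Fin m → ℝ, Qf v Iid = ∑ k, (v k)^2 := by
    intro v
    unfold Qf
    refine Finset.sum_congr rfl fun k _ => ?_
    have : ∀ k', v k * Iid (k, k') * v k' = (if k = k' then v k * v k' else 0) := by
      intro k'
      show v k * (if k = k' then (1:ℝ) else 0) * v k' = _
      by_cases h : k = k' <;> simp [h]
    rw [Finset.sum_congr rfl fun k' _ => this k']
    rw [Finset.sum_ite_eq]
    simp [sq]
  have hsum_pos : ∀ v : Fin m → ℝ, v ≠ 0 → 0 < ∑ k, (v k)^2 := by
    intro v hv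
    obtain ⟨k, hk⟩ := Function.ne_iff.mp hv
    refine Finset.sum_pos' (fun k' _ => sq_nonneg _) ⟨k, Finset.mem_univ k, ?_⟩
    have : v k ≠ 0 := hk
    positivity
  have hIid_mem : Iid ∈ sPD := by
    intro v hv
    rw [hQI]
    exact hsum_pos v hv
  -- disjointness
  have hdis : Disjoint sPD W := by
    rw [Set.disjoint_left]
    intro A hA hAW
    exact hdisj A hAW (fun v hv => hA v hv)
  obtain ⟨f, u₀, hfs, hft⟩ := geometric_hahn_banach_open hconv hopen hWconv hdis
  -- representation of f
  set c : (Fin m × Fin m) → ℝ := fun p => f (EuclideanSpace.single p 1) with hcdef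
  have frep : ∀ A : (EuclideanSpace ℝ (Fin m × Fin m)), f A = ∑ p : Fin m × Fin m, A p * c p := by
    intro A
    have hA : A = ∑ p : Fin m × Fin m, A p • EuclideanSpace.single p 1 := by
      ext q
      rw [euclid_sum_apply]
      have : ∀ p, (A p • EuclideanSpace.single p (1:ℝ)) q
          = if q = p then A p else 0 := by
        intro p
        have h1 : (A p • EuclideanSpace.single p (1:ℝ)) q
            = A p * EuclideanSpace.single p (1:ℝ) q := rfl
        rw [h1, EuclideanSpace.single_apply]
        by_cases h : q = p <;> simp [h]
      rw [Finset.sum_congr rfl fun p _ => this p, Finset.sum_ite_eq]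
      simp
    conv_lhs => rw [hA]
    rw [_root_.map_sum]
    refine Finset.sum_congr rfl fun p _ => ?_
    rw [_root_.map_smul]
    simp [hcdef, smul_eq_mul]
  -- the candidate matrix
  set D : Matrix (Fin m) (Fin m) ℝ :=
    Matrix.of (fun k k' => -(c (k, k') + c (k', k))/2) with hD
  -- f on symmetric elements
  have fsym : ∀ A : (EuclideanSpace ℝ (Fin m × Fin m)), (∀ k k', A (k, k') = A (k', k)) →
      f A = - ∑ k, ∑ k', D k k' * A (k, k') := by
    intro A hsymA
    rw [frep A, Fintype.sum_prod_type]
    have hswap : ∑ k, ∑ k', c (k', k) * A (k, k') = ∑ k, ∑ k', c (k, k') * A (k, k') := by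
      rw [Finset.sum_comm]
      refine Finset.sum_congr rfl fun k _ => Finset.sum_congr rfl fun k' _ => ?_
      rw [hsymA k k']
    have expand : - ∑ k, ∑ k', D k k' * A (k, k')
        = (∑ k, ∑ k', c (k, k') * A (k, k'))/2 + (∑ k, ∑ k', c (k', k) * A (k, k'))/2 := by
      rw [← Finset.sum_neg_distrib]
      rw [Finset.sum_div, Finset.sum_div, ← Finset.sum_add_distrib]
      refine Finset.sum_congr rfl fun k _ => ?_
      rw [← Finset.sum_neg_distrib, Finset.sum_div, Finset.sum_div, ← Finset.sum_add_distrib]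
      refine Finset.sum_congr rfl fun k' _ => ?_
      show -(D k k' * A (k, k')) = _
      have : D k k' = -(c (k, k') + c (k', k))/2 := rfl
      rw [this]; ring
    rw [expand, hswap]
    have : ∑ k, ∑ k', A (k, k') * c (k, k') = ∑ k, ∑ k', c (k, k') * A (k, k') :=
      Finset.sum_congr rfl fun k _ => Finset.sum_congr rfl fun k' _ => mul_comm _ _
    rw [this]
    ring
  -- 0 ≤ u₀
  have hu0 : 0 ≤ u₀ := by
    by_contra hu
    push_neg at hu
    set aI := f Iid with haI
    have hIe : ∀ ε : ℝ, 0 < ε → ε * aI < u₀ := by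
      intro ε hε
      have hmem : ε • Iid ∈ sPD := by
        intro v hv
        rw [Qf_smul, hQI]
        exact mul_pos hε (hsum_pos v hv)
      have := hfs _ hmem
      rwa [_root_.map_smul, smul_eq_mul] at this
    have h1 : aI < u₀ := by simpa using hIe 1 one_pos
    have haneg : aI < 0 := lt_trans h1 hu
    have hεp : 0 < u₀/(2*aI) := div_pos_of_neg_of_neg hu (by linarith)
    have h2 := hIe _ hεp
    have hane : aI ≠ 0 := ne_of_lt haneg
    have h3 : (u₀/(2*aI)) * aI = u₀/2 := by
      field_simp
    rw [h3] at h2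
    linarith
  -- constancy of f on W
  obtain ⟨A₀, hA₀⟩ := hWne
  set γ := f A₀ with hγ
  have hconst : ∀ A ∈ W, f A = γ := by
    intro A hA
    have hsl : ∀ t : ℝ, u₀ ≤ γ + t * (f A - γ) := by
      intro t
      have h1 := hft _ (hWline A₀ hA₀ A hA t)
      rwa [_root_.map_add, _root_.map_smul, _root_.map_sub, smul_eq_mul] at h1
    have := slope_zero_lower hsl
    linarith
  have hu0γ : u₀ ≤ γ := hft A₀ hA₀
  -- f Az ≤ 0 for rank-one symmetric Az
  have hAz_le : ∀ z : Fin m → ℝ, f (WithLp.toLp 2 (fun p : Fin m × Fin m => z p.1 * z p.2) : (EuclideanSpace ℝ (Fin m × Fin m))) ≤ 0 := by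
    intro z
    set Az : (EuclideanSpace ℝ (Fin m × Fin m)) := WithLp.toLp 2 (fun p : Fin m × Fin m => z p.1 * z p.2) with hAzdef
    have hQAz : ∀ v : Fin m → ℝ, Qf v Az = (∑ k, v k * z k)^2 := by
      intro v
      unfold Qf
      rw [sq, Finset.sum_mul_sum]
      refine Finset.sum_congr rfl fun k _ => Finset.sum_congr rfl fun k' _ => ?_
      show v k * Az (k, k') * v k' = _
      have : Az (k, k') = z k * z k' := rfl
      rw [this]; ring
    have hmem : ∀ ε : ℝ, 0 < ε → ∀ t : ℝ, 0 < t → t • (Az + ε • Iid) ∈ sPD := by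
      intro ε hε t ht v hv
      rw [Qf_smul, Qf_add, Qf_smul, hQAz, hQI]
      have := hsum_pos v hv
      have := sq_nonneg (∑ k, v k * z k)
      positivity
    have hfe : ∀ ε : ℝ, 0 < ε → f (Az + ε • Iid) ≤ 0 := by
      intro ε hε
      by_contra hpos
      push_neg at hpos
      set val := f (Az + ε • Iid) with hval
      have ht : (0:ℝ) < (u₀ + 1)/val := by positivity
      have h1 := hfs _ (hmem ε hε _ ht)
      rw [_root_.map_smul, smul_eq_mul] at h1
      have h2 : (u₀+1)/val * val = u₀ + 1 := by field_simp
      rw [h2] at h1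
      linarith
    have hfin : ∀ ε : ℝ, 0 < ε → f Az + ε * f Iid ≤ 0 := by
      intro ε hε
      have := hfe ε hε
      rwa [_root_.map_add, _root_.map_smul, smul_eq_mul] at this
    by_contra hpos
    push_neg at hpos
    rcases le_or_gt 0 (f Iid) with hI | hI
    · have := hfin 1 one_pos
      linarith
    · have hεp : 0 < f Az / (-2 * f Iid) := by
        apply div_pos hpos
        linarith
      have h4 := hfin _ hεp
      have hIne : f Iid ≠ 0 := ne_of_lt hI
      have h5 : f Az / (-2 * f Iid) * f Iid = - f Az / 2 := by
        field_simp
      rw [h5] at h4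
      linarith
  -- D is PSD
  have hDpsd : D.PosSemidef := by
    refine .of_dotProduct_mulVec_nonneg ?_ ?_
    · show Dᴴ = D
      refine Matrix.ext fun k k' => ?_
      rw [Matrix.conjTranspose_apply, star_trivial]
      show -(c (k', k) + c (k, k'))/2 = -(c (k, k') + c (k', k))/2
      ring
    · intro z
      rw [star_vec_trivial]
      set Az : (EuclideanSpace ℝ (Fin m × Fin m)) := WithLp.toLp 2 (fun p : Fin m × Fin m => z p.1 * z p.2) with hAzdef
      have hsymAz : ∀ k k', Az (k, k') = Az (k', k) := by
        intro k k'
        show z k * z k' = z k' * z k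
        ring
      have h1 := fsym Az hsymAz
      have h2 : z ⬝ᵥ D *ᵥ z = ∑ k, ∑ k', D k k' * Az (k, k') := by
        have hAzv : ∀ k k', Az (k, k') = z k * z k' := fun _ _ => rfl
        simp only [dotProduct, Matrix.mulVec, hAzv, Finset.mul_sum]
        refine Finset.sum_congr rfl fun k _ => Finset.sum_congr rfl fun k' _ => ?_
        ring
      rw [h2]
      have h3 := hAz_le z
      rw [h1] at h3
      linarith
  -- D ≠ 0
  have hDne : D ≠ 0 := by
    intro h0
    have hγ0 : γ = 0 := by
      have := fsym A₀ (hWsym A₀ hA₀)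
      rw [h0] at this
      simp at this
      rw [← hγ] at this
      exact this
    have hIf : f Iid = 0 := by
      have hsymI : ∀ k k', Iid (k, k') = Iid (k', k) := by
        intro k k'
        show (if k = k' then (1:ℝ) else 0) = (if k' = k then (1:ℝ) else 0)
        by_cases h : k = k' <;> simp [h, Ne.symm]
      have := fsym Iid hsymI
      rw [h0] at this
      simpa using this
    have h1 := hfs Iid hIid_mem
    rw [hIf] at h1
    linarith
  refine ⟨D, -γ, hDpsd, hDne, by linarith, ?_⟩
  intro A hA
  have h1 := fsym A (hWsym A hA)
  rw [hconst A hA] at h1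
  linarith
end Separation

section MainInduction

variable {g ν : ℕ}

lemma algebraMap_mul_smul (c d : ℝ) (p : FreePoly g) :
    algebraMap ℝ (FreePoly g) c * p * algebraMap ℝ (FreePoly g) d = (c * d) • p := by
  rw [mul_assoc, ← Algebra.commutes d p, ← mul_assoc, ← _root_.map_mul, ← Algebra.smul_def]

lemma REP_const (C : ℝ) : REP g (C, 0) = algebraMap ℝ (FreePoly g) C := by
  simp [REP]

lemma sum_smul_REP {κ' : Type*} [Fintype κ'] (cf : κ' → ℝ) (C : κ' → ℝ)
    (a : κ' → Lttr g → ℝ) :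
    ∑ j, cf j • REP g (C j, a j)
      = REP g (∑ j, cf j * C j, fun l => ∑ j, cf j * a j l) := by
  have h1 : ∀ j : κ', cf j • REP g (C j, a j) = REP g (cf j • (C j, a j)) :=
    fun j => (_root_.map_smul (REP g) _ _).symm
  rw [Finset.sum_congr rfl fun j _ => h1 j, ← _root_.map_sum]
  congr 1
  refine Prod.ext ?_ ?_
  · rw [Prod.fst_sum]
    exact Finset.sum_congr rfl fun j _ => rfl
  · rw [Prod.snd_sum]
    funext l
    rw [Finset.sum_apply]
    exact Finset.sum_congr rfl fun j _ => rfl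

lemma one_mem_of_const {J : Submodule (FreePoly g) (Fin 1 → FreePoly g)} {c : ℝ} (hc : c ≠ 0)
    (h : (fun _ : Fin 1 => algebraMap ℝ (FreePoly g) c) ∈ J) :
    (fun _ : Fin 1 => (1 : FreePoly g)) ∈ J := by
  have heq : (fun _ : Fin 1 => (1 : FreePoly g))
      = (algebraMap ℝ (FreePoly g) c⁻¹) • (fun _ : Fin 1 => algebraMap ℝ (FreePoly g) c) := by
    funext z
    show (1 : FreePoly g) = algebraMap ℝ (FreePoly g) c⁻¹ * algebraMap ℝ (FreePoly g) c
    rw [← _root_.map_mul, inv_mul_cancel₀ hc, _root_.map_one]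
  rw [heq]
  exact Submodule.smul_mem _ _ h

lemma row_sum_mem {J : Submodule (FreePoly g) (Fin 1 → FreePoly g)} {κ' : Type*} [Fintype κ']
    (cf : κ' → ℝ) (F : κ' → FreePoly g) (hF : ∀ j, (fun _ : Fin 1 => F j) ∈ J) :
    (fun _ : Fin 1 => ∑ j, cf j • F j) ∈ J := by
  have heq : (fun _ : Fin 1 => ∑ j, cf j • F j)
      = ∑ j, (algebraMap ℝ (FreePoly g) (cf j)) • (fun _ : Fin 1 => F j) := by
    funext z
    rw [Finset.sum_apply]
    refine Finset.sum_congr rfl fun j _ => ?_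
    show cf j • F j = algebraMap ℝ (FreePoly g) (cf j) * F j
    rw [Algebra.smul_def]
  rw [heq]
  exact Submodule.sum_mem _ fun j _ => Submodule.smul_mem _ _ (hF j)

lemma sumline {n' : ℕ} (F G : Fin n' → ℝ) (t : ℝ) :
    ∑ i, (F i + t * (G i - F i)) = (∑ i, F i) + t * ((∑ i, G i) - (∑ i, F i)) := by
  rw [Finset.sum_add_distrib, ← Finset.mul_sum, Finset.sum_sub_distrib]

lemma swap3 {α β γ : Type*} {M : Type*} [AddCommMonoid M] [Fintype α] [Fintype β] [Fintype γ]
    (f : α → β → γ → M) :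
    ∑ a, ∑ b, ∑ c, f a b c = ∑ c, ∑ a, ∑ b, f a b c := by
  calc ∑ a, ∑ b, ∑ c, f a b c
      = ∑ a, ∑ c, ∑ b, f a b c := Finset.sum_congr rfl fun a _ => Finset.sum_comm
    _ = ∑ c, ∑ a, ∑ b, f a b c := Finset.sum_comm


lemma euclid_comb_apply {ι : Type*} [Fintype ι] (A B : EuclideanSpace ℝ ι) (t : ℝ) (p : ι) :
    (A + t • (B - A)) p = A p + t * (B p - A p) := rfl

lemma dot_mulVec_expand {n : ℕ} (M : Matrix (Fin n) (Fin n) ℝ) (v : Fin n → ℝ) :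
    v ⬝ᵥ M *ᵥ v = ∑ i, v i * ∑ j, M i j * v j := rfl

lemma Qf_expand {m : ℕ} (z : Fin m → ℝ) (A : EuclideanSpace ℝ (Fin m × Fin m)) :
    Qf z A = ∑ k, ∑ k', z k * A (k, k') * z k' := rfl

set_option maxHeartbeats 3000000 in
/-- The key step: if the scalar LMI is infeasible, every `L`-real left module contains `1`. -/
lemma one_mem_of_isLReal {L : Matrix (Fin ν) (Fin ν) (FreePoly g)} (hL : IsPencil L)
    (hinf : ¬∃ x : Fin g → ℝ, (Lam L x).PosSemidef)
    {J : Submodule (FreePoly g) (Fin 1 → FreePoly g)} (hJ : IsLReal L J) :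
    (fun _ : Fin 1 => (1 : FreePoly g)) ∈ J := by
  classical
  have hrep : ∀ i j, ∃ Ca : ℝ × (Lttr g → ℝ), L i j = REP g Ca := fun i j => REPR (hL.2 i j)
  set CL : Fin ν → Fin ν → ℝ := fun i j => (Classical.choose (hrep i j)).1 with hCL
  set aL : Fin ν → Fin ν → Lttr g → ℝ := fun i j => (Classical.choose (hrep i j)).2 with haL
  have hLrep : ∀ i j, L i j = REP g (CL i j, aL i j) := by
    intro i j
    have := Classical.choose_spec (hrep i j)
    rwa [← Prod.mk.eta (p := Classical.choose (hrep i j))] at this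
  set vL : Fin ν → Fin ν → Fin g → ℝ :=
    fun i j i' => aL i j (Sum.inl i') + aL i j (Sum.inr i') with hvL
  have hLam : ∀ (x : Fin g → ℝ) i j, Lam L x i j = CL i j + ∑ i', vL i j i' * x i' := by
    intro x i j
    rw [Lam_apply, hLrep i j, REP_eval]
  set Φ : Fin ν → (EuclideanSpace ℝ (Fin ν)) →ₗ[ℝ] (Fin 1 → FreePoly g) := fun i =>
    { toFun := fun u => fun _ => ∑ j, u j • L i j
      map_add' := by
        intro u u'
        funext z
        show (∑ j, (u j + u' j) • L i j) = (∑ j, u j • L i j) + ∑ j, u' j • L i j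
        rw [← Finset.sum_add_distrib]
        exact Finset.sum_congr rfl fun j _ => add_smul _ _ _
      map_smul' := by
        intro c u
        funext z
        show (∑ j, (c * u j) • L i j) = c • ∑ j, u j • L i j
        rw [Finset.smul_sum]
        exact Finset.sum_congr rfl fun j _ => (smul_smul c (u j) (L i j)).symm } with hΦ
  suffices H : ∀ k : ℕ, ∀ U : Submodule ℝ (EuclideanSpace ℝ (Fin ν)),
      (∀ i, U ≤ Submodule.comap (Φ i) (J.restrictScalars ℝ)) →
      ν - Module.finrank ℝ U ≤ k → (fun _ : Fin 1 => (1 : FreePoly g)) ∈ J by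
    exact H ν ⊥ (fun i => bot_le) (Nat.sub_le _ _)
  intro k
  induction k using Nat.strong_induction_on with
  | _ k ih =>
  intro U hgood hrank
  set dU := Module.finrank ℝ U with hdU
  set bU : Module.Basis (Fin dU) ℝ U := Module.finBasis ℝ U with hbU
  set Pv : Fin dU → Fin ν → ℝ :=
    fun kk j => (bU kk : EuclideanSpace ℝ (Fin ν)) j with hPv
  set CH : (Fin dU × Fin ν) → ℝ := fun j => ∑ j', Pv j.1 j' * CL j.2 j' with hCH
  set aH : (Fin dU × Fin ν) → Lttr g → ℝ :=
    fun j l => ∑ j', Pv j.1 j' * aL j.2 j' l with haH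
  set hvD : (Fin dU × Fin ν) → Fin g → ℝ :=
    fun j i' => ∑ j', Pv j.1 j' * vL j.2 j' i' with hhvD
  set Hfree : (Fin dU × Fin ν) → FreePoly g :=
    fun j => ∑ j', (Pv j.1 j') • L j.2 j' with hHfree
  have hHmem : ∀ j : Fin dU × Fin ν, (fun _ : Fin 1 => Hfree j) ∈ J := by
    intro j
    have h1 : (bU j.1 : EuclideanSpace ℝ (Fin ν)) ∈ U := Submodule.coe_mem _
    have h2 := hgood j.2 h1
    rw [Submodule.mem_comap, Submodule.restrictScalars_mem] at h2
    exact h2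
  have hHdata : ∀ j : Fin dU × Fin ν, Hfree j = REP g (CH j, aH j) := by
    intro j
    show (∑ j', (Pv j.1 j') • L j.2 j') = _
    rw [Finset.sum_congr rfl fun j' _ => by rw [hLrep j.2 j'], sum_smul_REP]
  have hHeval : ∀ (x : Fin g → ℝ) (j : Fin dU × Fin ν),
      scalEval x (Hfree j) = CH j + ∑ i', hvD j i' * x i' := by
    intro x j
    rw [hHdata j, REP_eval]
    congr 1
    refine Finset.sum_congr rfl fun i' _ => ?_
    congr 1
    show (∑ j', Pv j.1 j' * aL j.2 j' (Sum.inl i'))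
        + (∑ j', Pv j.1 j' * aL j.2 j' (Sum.inr i'))
        = ∑ j', Pv j.1 j' * vL j.2 j' i'
    rw [← Finset.sum_add_distrib]
    exact Finset.sum_congr rfl fun j' _ => by rw [hvL]; ring
  have hHL : ∀ (x : Fin g → ℝ) (kk : Fin dU) (i : Fin ν),
      scalEval x (Hfree (kk, i)) = ∑ j', Lam L x i j' * Pv kk j' := by
    intro x kk i
    show scalEval x (∑ j', (Pv kk j') • L i j') = _
    rw [_root_.map_sum]
    refine Finset.sum_congr rfl fun j' _ => ?_
    rw [_root_.map_smul, Lam_apply, smul_eq_mul]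
    ring
  have hkill : ∀ (x : Fin g → ℝ), (∀ j : Fin dU × Fin ν, scalEval x (Hfree j) = 0) →
      ∀ u, u ∈ U → ∀ i, ∑ j', Lam L x i j' * u j' = 0 := by
    intro x hx u hu i
    have hb : ∀ kk : Fin dU, ∑ j', Lam L x i j' * Pv kk j' = 0 := by
      intro kk
      rw [← hHL x kk i]
      exact hx (kk, i)
    have hcoe : ∀ jj, u jj = ∑ kk, (bU.repr ⟨u, hu⟩) kk * Pv kk jj := by
      intro jj
      have hrepr := Module.Basis.sum_repr bU ⟨u, hu⟩
      have h1 := congrArg (fun w : U => (w : EuclideanSpace ℝ (Fin ν)) jj) hrepr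
      simp only at h1
      rw [← h1]
      have h2 : ((∑ kk, (bU.repr ⟨u, hu⟩) kk • bU kk : U) : EuclideanSpace ℝ (Fin ν))
          = ∑ kk, (bU.repr ⟨u, hu⟩) kk • (bU kk : EuclideanSpace ℝ (Fin ν)) := by
        rw [AddSubmonoidClass.coe_finset_sum]
        exact Finset.sum_congr rfl fun kk _ => rfl
      rw [h2, euclid_sum_apply]
      rfl
    calc ∑ j', Lam L x i j' * u j'
        = ∑ j', ∑ kk, (bU.repr ⟨u, hu⟩) kk * (Lam L x i j' * Pv kk j') := by
          refine Finset.sum_congr rfl fun j' _ => ?_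
          rw [hcoe j', Finset.mul_sum]
          exact Finset.sum_congr rfl fun kk _ => by ring
      _ = ∑ kk, (bU.repr ⟨u, hu⟩) kk * ∑ j', Lam L x i j' * Pv kk j' := by
          rw [Finset.sum_comm]
          exact Finset.sum_congr rfl fun kk _ => (Finset.mul_sum _ _ _).symm
      _ = 0 := by
          rw [Finset.sum_congr rfl fun kk _ => by rw [hb kk, mul_zero]]
          exact Finset.sum_const_zero
  by_cases hT : ∃ x : Fin g → ℝ, ∀ j : Fin dU × Fin ν, CH j + ∑ i', hvD j i' * x i' = 0
  case neg =>
    obtain ⟨y, hy1, hy2⟩ := LA1 CH hvD hT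
    set r : FreePoly g := ∑ j, (-(y j)) • Hfree j with hr
    have hrrow : (fun _ : Fin 1 => r) ∈ J := row_sum_mem _ _ hHmem
    have hrdata : r = REP g (∑ j, (-(y j)) * CH j, fun l => ∑ j, (-(y j)) * aH j l) := by
      rw [hr, Finset.sum_congr rfl fun j _ => by rw [hHdata j], sum_smul_REP]
    have hreval : ∀ x : Fin g → ℝ, scalEval x r = -1 := by
      intro x
      rw [hr, _root_.map_sum]
      have hterm : ∀ j, scalEval x ((-(y j)) • Hfree j)
          = (-(y j)) * CH j + ∑ i', (-(y j)) * (hvD j i' * x i') := by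
        intro j
        rw [_root_.map_smul, smul_eq_mul, hHeval, mul_add]
        congr 1
        exact Finset.mul_sum _ _ _
      rw [Finset.sum_congr rfl fun j _ => hterm j, Finset.sum_add_distrib]
      have hA : ∑ j, (-(y j)) * CH j = -1 := by
        have e : ∑ j, (-(y j)) * CH j = -(∑ j, y j * CH j) := by
          rw [← Finset.sum_neg_distrib]
          exact Finset.sum_congr rfl fun j _ => by ring
        rw [e, hy2]
      have hB : ∑ j, ∑ i', (-(y j)) * (hvD j i' * x i') = 0 := by
        rw [Finset.sum_comm]
        have hBin : ∀ i', ∑ j, (-(y j)) * (hvD j i' * x i') = 0 := by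
          intro i'
          have e : ∑ j, (-(y j)) * (hvD j i' * x i') = (∑ j, y j * hvD j i') * (-(x i')) := by
            rw [Finset.sum_mul]
            exact Finset.sum_congr rfl fun j _ => by ring
          rw [e, hy1 i', zero_mul]
        rw [Finset.sum_congr rfl fun i' _ => hBin i']
        exact Finset.sum_const_zero
      rw [hA, hB, add_zero]
    have hcancel : r + pstar r = algebraMap ℝ (FreePoly g) (-2) := by
      set Cr := ∑ j, (-(y j)) * CH j with hCr
      set ar : Lttr g → ℝ := fun l => ∑ j, (-(y j)) * aH j l with har
      have h3 : REP g (Cr + 1, ar) = r + algebraMap ℝ (FreePoly g) 1 := by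
        have hpr : ((Cr + 1 : ℝ), ar) = ((Cr, ar) : ℝ × (Lttr g → ℝ)) + ((1:ℝ), (0 : Lttr g → ℝ)) := by
          refine Prod.ext rfl ?_
          funext l
          show ar l = ar l + 0
          rw [add_zero]
        rw [hpr, _root_.map_add, ← hrdata, REP_const]
      have hw : ∀ x : Fin g → ℝ, scalEval x (REP g (Cr + 1, ar)) = 0 := by
        intro x
        rw [h3, _root_.map_add, hreval, AlgHom.commutes]
        simp
      have h2 := REP_cancel _ _ hw
      rw [h3, pstar_add, pstar_algebraMap] at h2
      have h5 : r + algebraMap ℝ (FreePoly g) 1 + (pstar r + algebraMap ℝ (FreePoly g) 1)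
          = (r + pstar r) + (algebraMap ℝ (FreePoly g) 1 + algebraMap ℝ (FreePoly g) 1) := by
        abel
      rw [h5] at h2
      have h6 := eq_neg_of_add_eq_zero_left h2
      rw [h6, ← _root_.map_add, ← _root_.map_neg]
      norm_num
    set c0 : ℝ := Real.sqrt 2 with hc0
    have hc0pos : (0:ℝ) < c0 := Real.sqrt_pos.mpr (by norm_num)
    have hc0sq : c0 * c0 = 2 := Real.mul_self_sqrt (by norm_num)
    have hmemb : ((∑ i : Fin 1, sqForm ((fun (_ : Fin 1) (_ : Fin 1) =>
          algebraMap ℝ (FreePoly g) c0) i))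
        + ∑ j : Fin 0, quadForm L ((fun (_ : Fin 0) => (0 : Matrix (Fin ν) (Fin 1) (FreePoly g))) j))
        ∈ modPlusStar J := by
      refine ⟨(fun _ _ => -r), (fun _ _ => -r), ?_, ?_, ?_⟩
      · intro z
        show (fun _ : Fin 1 => -r) ∈ J
        have he : (fun _ : Fin 1 => -r) = -(fun _ : Fin 1 => r) := rfl
        rw [he]
        exact Submodule.neg_mem _ hrrow
      · intro z
        show (fun _ : Fin 1 => -r) ∈ J
        have he : (fun _ : Fin 1 => -r) = -(fun _ : Fin 1 => r) := rfl
        rw [he]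
        exact Submodule.neg_mem _ hrrow
      · refine Matrix.ext fun a b => ?_
        rw [Matrix.add_apply, Matrix.sum_apply, Matrix.sum_apply,
          Fin.sum_univ_one, Fin.sum_univ_zero, add_zero]
        show pstar (algebraMap ℝ (FreePoly g) c0) * algebraMap ℝ (FreePoly g) c0
            = -r + pstar (-r)
        rw [pstar_algebraMap, ← _root_.map_mul, hc0sq, pstar_neg]
        have he2 : -r + -pstar r = -(r + pstar r) := by abel
        rw [he2, hcancel, ← _root_.map_neg]
        norm_num
    obtain ⟨hpmem, -⟩ := hJ 1 0 _ _ hmemb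
    exact one_mem_of_const (ne_of_gt hc0pos) (hpmem 0)
  case pos =>
    obtain ⟨x₀, hx₀⟩ := hT
    set K := Uᗮ with hK
    set m := Module.finrank ℝ K with hm
    set Tp : (Fin g → ℝ) → Prop :=
      fun x => ∀ j : Fin dU × Fin ν, CH j + ∑ i', hvD j i' * x i' = 0 with hTp
    have hTkill : ∀ x, Tp x → ∀ u, u ∈ U →
        ∀ i, ∑ j', Lam L x i j' * u j' = 0 := by
      intro x hx
      refine hkill x (fun j => ?_)
      rw [hHeval]
      exact hx j
    have hsum := Submodule.finrank_add_finrank_orthogonal U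
    rw [finrank_euclideanSpace, Fintype.card_fin] at hsum
    by_cases hm0 : m = 0
    · exfalso
      rw [hm, hK] at hm0
      have hUtop : U = ⊤ := by
        apply Submodule.eq_top_of_finrank_eq
        rw [finrank_euclideanSpace, Fintype.card_fin]
        omega
      have hzero : ∀ (i : Fin ν) (v : Fin ν → ℝ), ∑ j', Lam L x₀ i j' * v j' = 0 := by
        intro i v
        exact hTkill x₀ hx₀ (WithLp.toLp 2 v) (by rw [hUtop]; trivial) i
      refine hinf ⟨x₀, .of_dotProduct_mulVec_nonneg (Lam_isHermitian hL x₀) fun v => ?_⟩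
      rw [star_vec_trivial]
      have he : v ⬝ᵥ (Lam L x₀) *ᵥ v = ∑ i, v i * ∑ j', Lam L x₀ i j' * v j' :=
        dot_mulVec_expand _ _
      rw [he, Finset.sum_congr rfl fun i _ => by rw [hzero i v, mul_zero],
        Finset.sum_const_zero]
    · rw [hm, hK] at hm0
      set bK : Module.Basis (Fin m) ℝ K := Module.finBasis ℝ K with hbK
      set P : Fin ν → Fin m → ℝ := fun i kk => (bK kk : EuclideanSpace ℝ (Fin ν)) i with hP
      set ΛP : (Fin g → ℝ) → EuclideanSpace ℝ (Fin m × Fin m) := fun x =>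
        WithLp.toLp 2 (fun p : Fin m × Fin m => ∑ i, ∑ j, P i p.1 * Lam L x i j * P j p.2) with hΛP
      set W : Set (EuclideanSpace ℝ (Fin m × Fin m)) := {A | ∃ x, Tp x ∧ A = ΛP x} with hW
      -- affine structure
      have hTline : ∀ x1 x2 : Fin g → ℝ, Tp x1 → Tp x2 → ∀ t : ℝ,
          Tp (fun i' => x1 i' + t * (x2 i' - x1 i')) := by
        intro x1 x2 h1 h2 t j
        have e1 : ∑ i', hvD j i' * (x1 i' + t * (x2 i' - x1 i'))
            = (∑ i', hvD j i' * x1 i')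
              + t * ((∑ i', hvD j i' * x2 i') - (∑ i', hvD j i' * x1 i')) := by
          rw [← sumline (fun i' => hvD j i' * x1 i') (fun i' => hvD j i' * x2 i') t]
          exact Finset.sum_congr rfl fun i' _ => by ring
        have h3 := h1 j
        have h4 := h2 j
        show CH j + ∑ i', hvD j i' * (x1 i' + t * (x2 i' - x1 i')) = 0
        rw [e1]
        have h5 : (∑ i', hvD j i' * x2 i') - (∑ i', hvD j i' * x1 i') = 0 := by linarith
        rw [h5, mul_zero, add_zero]
        linarith
      have hLamline : ∀ (x1 x2 : Fin g → ℝ) (t : ℝ) (i j : Fin ν),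
          Lam L (fun i' => x1 i' + t * (x2 i' - x1 i')) i j
            = Lam L x1 i j + t * (Lam L x2 i j - Lam L x1 i j) := by
        intro x1 x2 t i j
        rw [hLam, hLam, hLam]
        have e1 : ∑ i', vL i j i' * (x1 i' + t * (x2 i' - x1 i'))
            = (∑ i', vL i j i' * x1 i')
              + t * ((∑ i', vL i j i' * x2 i') - (∑ i', vL i j i' * x1 i')) := by
          rw [← sumline (fun i' => vL i j i' * x1 i') (fun i' => vL i j i' * x2 i') t]
          exact Finset.sum_congr rfl fun i' _ => by ring
        rw [e1]
        ring
      have hWline : ∀ A ∈ W, ∀ B ∈ W, ∀ t : ℝ, A + t • (B - A) ∈ W := by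
        rintro A ⟨x1, hx1, rfl⟩ B ⟨x2, hx2, rfl⟩ t
        refine ⟨fun i' => x1 i' + t * (x2 i' - x1 i'), hTline x1 x2 hx1 hx2 t, ?_⟩
        ext p
        rw [euclid_comb_apply]
        have this1 : (∑ i, ∑ j, P i p.1
              * Lam L (fun i' => x1 i' + t * (x2 i' - x1 i')) i j * P j p.2)
            = ΛP x1 p + t * (ΛP x2 p - ΛP x1 p) := by
          have e2 : ∀ i, ∑ j, P i p.1 * Lam L (fun i' => x1 i' + t * (x2 i' - x1 i')) i j * P j p.2
              = (∑ j, P i p.1 * Lam L x1 i j * P j p.2)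
                + t * ((∑ j, P i p.1 * Lam L x2 i j * P j p.2)
                  - (∑ j, P i p.1 * Lam L x1 i j * P j p.2)) := by
            intro i
            rw [← sumline (fun j => P i p.1 * Lam L x1 i j * P j p.2)
              (fun j => P i p.1 * Lam L x2 i j * P j p.2) t]
            refine Finset.sum_congr rfl fun j _ => ?_
            rw [hLamline x1 x2 t i j]
            ring
          rw [Finset.sum_congr rfl fun i _ => e2 i]
          rw [sumline (fun i => ∑ j, P i p.1 * Lam L x1 i j * P j p.2)
            (fun i => ∑ j, P i p.1 * Lam L x2 i j * P j p.2) t]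
        exact this1.symm
      have hWsym : ∀ A ∈ W, ∀ k k' : Fin m, A (k, k') = A (k', k) := by
        rintro A ⟨x, hx, rfl⟩ k k'
        show (∑ i, ∑ j, P i k * Lam L x i j * P j k')
            = ∑ i, ∑ j, P i k' * Lam L x i j * P j k
        rw [Finset.sum_comm]
        refine Finset.sum_congr rfl fun i _ => Finset.sum_congr rfl fun j _ => ?_
        rw [Lam_symm hL x i j]
        ring
      -- the compressed quadratic form
      have hquadP : ∀ (x : Fin g → ℝ) (z : Fin m → ℝ),
          Qf z (ΛP x)
            = ∑ i, ∑ j, (∑ kk, P i kk * z kk) * Lam L x i j * (∑ kk', P j kk' * z kk') := by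
        intro x z
        have lhs : Qf z (ΛP x)
            = ∑ k, ∑ k', ∑ i, ∑ j, z k * (P i k * Lam L x i j * P j k') * z k' := by
          show (∑ k, ∑ k', z k * (ΛP x) (k, k') * z k') = _
          refine Finset.sum_congr rfl fun k _ => Finset.sum_congr rfl fun k' _ => ?_
          show z k * (∑ i, ∑ j, P i k * Lam L x i j * P j k') * z k' = _
          rw [Finset.mul_sum, Finset.sum_mul]
          refine Finset.sum_congr rfl fun i _ => ?_
          rw [Finset.mul_sum, Finset.sum_mul]
        have rhs : ∑ i, ∑ j, (∑ kk, P i kk * z kk) * Lam L x i j * (∑ kk', P j kk' * z kk')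
            = ∑ i, ∑ j, ∑ k, ∑ k', z k * (P i k * Lam L x i j * P j k') * z k' := by
          refine Finset.sum_congr rfl fun i _ => Finset.sum_congr rfl fun j _ => ?_
          rw [Finset.sum_mul, Finset.sum_mul]
          refine Finset.sum_congr rfl fun k _ => ?_
          rw [Finset.mul_sum]
          refine Finset.sum_congr rfl fun k' _ => ?_
          ring
        rw [lhs, rhs]
        rw [swap3 (fun k k' i => ∑ j, z k * (P i k * Lam L x i j * P j k') * z k')]
        refine Finset.sum_congr rfl fun i _ => ?_
        rw [swap3 (fun k k' j => z k * (P i k * Lam L x i j * P j k') * z k')]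
      -- disjointness from the PD cone
      have hdisjW : ∀ A ∈ W, ¬ (∀ v : Fin m → ℝ, v ≠ 0 → 0 < Qf v A) := by
        rintro A ⟨x, hxT, rfl⟩ hall
        refine hinf ⟨x, .of_dotProduct_mulVec_nonneg (Lam_isHermitian hL x) fun v => ?_⟩
        rw [star_vec_trivial]
        have hvmem : WithLp.toLp 2 v ∈ U ⊔ K := by
          rw [hK, Submodule.sup_orthogonal_of_hasOrthogonalProjection]
          trivial
        obtain ⟨u, hu, w, hw, huw⟩ := Submodule.mem_sup.mp hvmem
        set z : Fin m → ℝ := fun kk => (bK.repr ⟨w, hw⟩) kk with hz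
        have hwP : ∀ jj, w jj = ∑ kk, P jj kk * z kk := by
          intro jj
          have hrepr := Module.Basis.sum_repr bK ⟨w, hw⟩
          have h1 := congrArg (fun ww : K => (ww : EuclideanSpace ℝ (Fin ν)) jj) hrepr
          simp only at h1
          rw [← h1]
          have h2 : ((∑ kk, (bK.repr ⟨w, hw⟩) kk • bK kk : K) : EuclideanSpace ℝ (Fin ν))
              = ∑ kk, (bK.repr ⟨w, hw⟩) kk • (bK kk : EuclideanSpace ℝ (Fin ν)) := by
            rw [AddSubmonoidClass.coe_finset_sum]
            exact Finset.sum_congr rfl fun kk _ => rfl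
          rw [h2, euclid_sum_apply]
          exact Finset.sum_congr rfl fun kk _ => mul_comm _ _
        have hudot : ∀ i, ∑ j', Lam L x i j' * u j' = 0 := hTkill x hxT u hu
        have hvdec : ∀ jj, v jj = u jj + w jj := by
          intro jj
          have := congrArg (fun ww : EuclideanSpace ℝ (Fin ν) => ww jj) huw
          simp only at this
          exact this.symm
        have hquad : v ⬝ᵥ (Lam L x) *ᵥ v = ∑ i, v i * ∑ j', Lam L x i j' * v j' :=
          dot_mulVec_expand _ _
        rw [hquad]
        have step1 : ∑ i, v i * ∑ j', Lam L x i j' * v j'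
            = ∑ i, (u i + w i) * ∑ j', Lam L x i j' * w j' := by
          refine Finset.sum_congr rfl fun i _ => ?_
          have e1 : ∑ j', Lam L x i j' * v j'
              = (∑ j', Lam L x i j' * u j') + ∑ j', Lam L x i j' * w j' := by
            rw [← Finset.sum_add_distrib]
            refine Finset.sum_congr rfl fun j' _ => ?_
            rw [hvdec j']
            ring
          rw [hvdec i, e1, hudot i, zero_add]
        rw [step1]
        have step2 : ∑ i, (u i + w i) * ∑ j', Lam L x i j' * w j'
            = (∑ i, u i * ∑ j', Lam L x i j' * w j')
              + ∑ i, w i * ∑ j', Lam L x i j' * w j' := by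
          rw [← Finset.sum_add_distrib]
          exact Finset.sum_congr rfl fun i _ => by ring
        rw [step2]
        have step3 : ∑ i, u i * ∑ j', Lam L x i j' * w j' = 0 := by
          calc ∑ i, u i * ∑ j', Lam L x i j' * w j'
              = ∑ i, ∑ j', u i * (Lam L x i j' * w j') :=
                Finset.sum_congr rfl fun i _ => Finset.mul_sum _ _ _
            _ = ∑ j', ∑ i, u i * (Lam L x i j' * w j') := Finset.sum_comm
            _ = ∑ j', w j' * ∑ i, Lam L x j' i * u i := by
                refine Finset.sum_congr rfl fun j' _ => ?_
                rw [Finset.mul_sum]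
                refine Finset.sum_congr rfl fun i _ => ?_
                rw [Lam_symm hL x j' i]
                ring
            _ = 0 := by
                rw [Finset.sum_congr rfl fun j' _ => by rw [hudot j', mul_zero]]
                exact Finset.sum_const_zero
        rw [step3, zero_add]
        have hfin : ∑ i, w i * ∑ j', Lam L x i j' * w j' = Qf z (ΛP x) := by
          rw [hquadP x z]
          refine Finset.sum_congr rfl fun i _ => ?_
          rw [Finset.mul_sum]
          refine Finset.sum_congr rfl fun j' _ => ?_
          rw [hwP i, hwP j']
          ring
        rw [hfin]
        by_cases hz0 : z = 0
        · rw [hz0]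
          show (0:ℝ) ≤ ∑ k, ∑ k', (0 : Fin m → ℝ) k * (ΛP x) (k, k') * (0 : Fin m → ℝ) k'
          simp
        · exact le_of_lt (hall z hz0)
      obtain ⟨D, β, hDpsd, hDne, hβle, hid⟩ :=
        separation W ⟨ΛP x₀, x₀, hx₀, rfl⟩ hWline hWsym hdisjW
      obtain ⟨S, hSS, hSherm⟩ := psd_sqrt_aux hDpsd
      have hSsym : ∀ a b, S a b = S b a := by
        intro a b
        have h1 := hSherm.apply a b
        rw [star_trivial] at h1
        exact h1.symm
      set G : Fin ν → Fin m → ℝ := fun i kk => ∑ kk', P i kk' * S kk' kk with hG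
      set GG : Fin ν → Fin ν → ℝ := fun i j => ∑ kk, G i kk * G j kk with hGG
      have hGGsym : ∀ i j, GG i j = GG j i := by
        intro i j
        exact Finset.sum_congr rfl fun kk _ => mul_comm _ _
      have hpair : ∀ x : Fin g → ℝ,
          ∑ i, ∑ j, GG i j * Lam L x i j = ∑ kk, ∑ kk', D kk kk' * (ΛP x) (kk, kk') := by
        intro x
        have e2 : ∀ i j, GG i j * Lam L x i j = ∑ kk, G i kk * Lam L x i j * G j kk := by
          intro i j
          show (∑ kk, G i kk * G j kk) * Lam L x i j = _
          rw [Finset.sum_mul]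
          exact Finset.sum_congr rfl fun kk _ => by ring
        rw [Finset.sum_congr rfl fun i _ => Finset.sum_congr rfl fun j _ => e2 i j]
        rw [swap3 (fun i j kk => G i kk * Lam L x i j * G j kk)]
        have e5 : ∀ kk, ∑ i, ∑ j, G i kk * Lam L x i j * G j kk
            = Qf (fun a => S a kk) (ΛP x) := by
          intro kk
          rw [hquadP x (fun a => S a kk)]
        rw [Finset.sum_congr rfl fun kk _ => e5 kk]
        have e6 : ∀ kk, Qf (fun a => S a kk) (ΛP x)
            = ∑ a, ∑ b, S a kk * (ΛP x) (a, b) * S b kk := fun kk => Qf_expand _ _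
        rw [Finset.sum_congr rfl fun kk _ => e6 kk]
        rw [(swap3 (fun a b kk => S a kk * (ΛP x) (a, b) * S b kk)).symm]
        refine Finset.sum_congr rfl fun a _ => Finset.sum_congr rfl fun b _ => ?_
        have e7 : ∑ kk, S a kk * (ΛP x) (a, b) * S b kk
            = (∑ kk, S a kk * S kk b) * (ΛP x) (a, b) := by
          rw [Finset.sum_mul]
          refine Finset.sum_congr rfl fun kk _ => ?_
          rw [hSsym b kk]
          ring
        rw [e7, ← Matrix.mul_apply, hSS]
      -- the free polynomial `sfree` and its data
      set Cs := ∑ p : Fin ν × Fin ν, GG p.1 p.2 * CL p.1 p.2 with hCs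
      set as : Lttr g → ℝ := fun l => ∑ p : Fin ν × Fin ν, GG p.1 p.2 * aL p.1 p.2 l with has
      set vs : Fin g → ℝ := fun i' => ∑ p : Fin ν × Fin ν, GG p.1 p.2 * vL p.1 p.2 i' with hvs
      set sfree : FreePoly g := ∑ p : Fin ν × Fin ν, GG p.1 p.2 • L p.1 p.2 with hsfree
      have hsdata : sfree = REP g (Cs, as) := by
        rw [hsfree, Finset.sum_congr rfl fun p _ => by rw [hLrep p.1 p.2], sum_smul_REP]
      have hseval' : ∀ x, scalEval x sfree = Cs + ∑ i', vs i' * x i' := by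
        intro x
        rw [hsdata, REP_eval]
        congr 1
        refine Finset.sum_congr rfl fun i' _ => ?_
        congr 1
        show (∑ p : Fin ν × Fin ν, GG p.1 p.2 * aL p.1 p.2 (Sum.inl i'))
            + (∑ p : Fin ν × Fin ν, GG p.1 p.2 * aL p.1 p.2 (Sum.inr i'))
            = ∑ p : Fin ν × Fin ν, GG p.1 p.2 * vL p.1 p.2 i'
        rw [← Finset.sum_add_distrib]
        exact Finset.sum_congr rfl fun p _ => by rw [hvL]; ring
      have hseval2 : ∀ x, scalEval x sfree = ∑ i, ∑ j, GG i j * Lam L x i j := by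
        intro x
        rw [hsfree, _root_.map_sum,
          Fintype.sum_prod_type (fun p : Fin ν × Fin ν => scalEval x (GG p.1 p.2 • L p.1 p.2))]
        refine Finset.sum_congr rfl fun i _ => Finset.sum_congr rfl fun j _ => ?_
        show scalEval x (GG i j • L i j) = _
        rw [_root_.map_smul, smul_eq_mul, Lam_apply]
      have hsT : ∀ x, Tp x → scalEval x sfree = β := by
        intro x hx
        rw [hseval2, hpair x]
        exact hid (ΛP x) ⟨x, hx, rfl⟩
      have hspstar : pstar sfree = sfree := by
        have h2 := _root_.map_sum (pstarL g)
          (fun p : Fin ν × Fin ν => GG p.1 p.2 • L p.1 p.2) Finset.univ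
        have h2' : pstar (∑ p : Fin ν × Fin ν, GG p.1 p.2 • L p.1 p.2)
            = ∑ p : Fin ν × Fin ν, GG p.1 p.2 • L p.2 p.1 := by
          show pstarL g (∑ p : Fin ν × Fin ν, GG p.1 p.2 • L p.1 p.2) = _
          rw [h2]
          refine Finset.sum_congr rfl fun p _ => ?_
          show pstar (GG p.1 p.2 • L p.1 p.2) = _
          rw [pstar_smul, pencil_pstar hL]
        rw [hsfree, h2']
        refine Fintype.sum_equiv (Equiv.prodComm _ _) _ _ fun p => ?_
        show GG p.1 p.2 • L p.2 p.1
            = GG ((Equiv.prodComm (Fin ν) (Fin ν)) p).1 ((Equiv.prodComm (Fin ν) (Fin ν)) p).2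
              • L ((Equiv.prodComm (Fin ν) (Fin ν)) p).1 ((Equiv.prodComm (Fin ν) (Fin ν)) p).2
        rw [Equiv.prodComm_apply]
        show GG p.1 p.2 • L p.2 p.1 = GG p.2 p.1 • L p.2 p.1
        rw [hGGsym p.1 p.2]
      obtain ⟨y, hy1, hy2⟩ := LA2 CH hvD x₀ hx₀ (Cs - β) vs (fun x hx => by
        have h1 := hsT x hx
        rw [hseval'] at h1
        linarith)
      set r : FreePoly g := ∑ j, y j • Hfree j with hr
      have hrrow : (fun _ : Fin 1 => r) ∈ J := row_sum_mem _ _ hHmem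
      set Cr := ∑ j, y j * CH j with hCr
      set ar : Lttr g → ℝ := fun l => ∑ j, y j * aH j l with har
      have hrdata : r = REP g (Cr, ar) := by
        rw [hr, Finset.sum_congr rfl fun j _ => by rw [hHdata j], sum_smul_REP]
      have haux : ∀ i', ar (Sum.inl i') + ar (Sum.inr i') = ∑ j, y j * hvD j i' := by
        intro i'
        show (∑ j, y j * aH j (Sum.inl i')) + (∑ j, y j * aH j (Sum.inr i'))
            = ∑ j, y j * hvD j i'
        rw [← Finset.sum_add_distrib]
        refine Finset.sum_congr rfl fun j _ => ?_
        have e1 : aH j (Sum.inl i') + aH j (Sum.inr i') = hvD j i' := by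
          show (∑ j', Pv j.1 j' * aL j.2 j' (Sum.inl i'))
              + (∑ j', Pv j.1 j' * aL j.2 j' (Sum.inr i')) = ∑ j', Pv j.1 j' * vL j.2 j' i'
          rw [← Finset.sum_add_distrib]
          exact Finset.sum_congr rfl fun j' _ => by rw [hvL]; ring
        rw [← e1]
        ring
      have hw0 : ∀ x, scalEval x (REP g (Cs - β - Cr, fun l => as l - ar l)) = 0 := by
        intro x
        rw [REP_eval]
        have e1 : ∀ i', ((fun l => as l - ar l) (Sum.inl i')
            + (fun l => as l - ar l) (Sum.inr i')) = 0 := by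
          intro i'
          show (as (Sum.inl i') - ar (Sum.inl i')) + (as (Sum.inr i') - ar (Sum.inr i')) = 0
          have h1 : as (Sum.inl i') + as (Sum.inr i') = vs i' := by
            show (∑ p : Fin ν × Fin ν, GG p.1 p.2 * aL p.1 p.2 (Sum.inl i'))
                + (∑ p : Fin ν × Fin ν, GG p.1 p.2 * aL p.1 p.2 (Sum.inr i'))
                = ∑ p : Fin ν × Fin ν, GG p.1 p.2 * vL p.1 p.2 i'
            rw [← Finset.sum_add_distrib]
            exact Finset.sum_congr rfl fun p _ => by rw [hvL]; ring
          have h2 := haux i'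
          have h3 := hy1 i'
          linarith
        rw [Finset.sum_congr rfl fun i' _ => by rw [e1 i', zero_mul]]
        rw [Finset.sum_const_zero]
        have : Cs - β - Cr = 0 := by
          rw [hy2] at *
          ring
        rw [this, add_zero]
      have hcancel0 := REP_cancel _ _ hw0
      have hveq : REP g (Cs - β - Cr, fun l => as l - ar l)
          = sfree - algebraMap ℝ (FreePoly g) β - r := by
        have hpe : ((Cs - β - Cr : ℝ), (fun l => as l - ar l))
            = ((Cs, as) : ℝ × (Lttr g → ℝ)) - ((β : ℝ), (0 : Lttr g → ℝ)) - (Cr, ar) := by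
          refine Prod.ext rfl ?_
          funext l
          show as l - ar l = as l - 0 - ar l
          ring
        rw [hpe, _root_.map_sub, _root_.map_sub, ← hsdata, ← hrdata, REP_const]
      rw [hveq] at hcancel0
      have hps : pstar (sfree - algebraMap ℝ (FreePoly g) β - r)
          = sfree - algebraMap ℝ (FreePoly g) β - pstar r := by
        have e1 : sfree - algebraMap ℝ (FreePoly g) β - r
            = sfree + (-(algebraMap ℝ (FreePoly g) β)) + (-r) := by abel
        rw [e1, pstar_add, pstar_add, pstar_neg, pstar_neg, pstar_algebraMap, hspstar]
        abel
      rw [hps] at hcancel0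
      have key : sfree + sfree = algebraMap ℝ (FreePoly g) (2*β) + r + pstar r := by
        have h3 : (sfree - algebraMap ℝ (FreePoly g) β - r)
            + (sfree - algebraMap ℝ (FreePoly g) β - pstar r)
            = (sfree + sfree) - (algebraMap ℝ (FreePoly g) β + algebraMap ℝ (FreePoly g) β
              + r + pstar r) := by abel
        rw [h3] at hcancel0
        have h4 := sub_eq_zero.mp hcancel0
        rw [h4, ← _root_.map_add]
        have : (β + β : ℝ) = 2*β := by ring
        rw [this]
      -- the certificate
      set c0 : ℝ := Real.sqrt (-(2*β)) with hc0
      have hc0sq : c0 * c0 = -(2*β) := Real.mul_self_sqrt (by linarith)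
      set c2 : ℝ := Real.sqrt 2 with hc2
      have hc2sq : c2 * c2 = 2 := Real.mul_self_sqrt (by norm_num)
      have hc2ne : c2 ≠ 0 := ne_of_gt (Real.sqrt_pos.mpr (by norm_num))
      set q : Fin m → Matrix (Fin ν) (Fin 1) (FreePoly g) :=
        fun kk => fun i _ => algebraMap ℝ (FreePoly g) (c2 * G i kk) with hq
      set p0 : Fin 1 → (Fin 1 → FreePoly g) :=
        fun _ => fun _ => algebraMap ℝ (FreePoly g) c0 with hp0
      have hquadent : ∀ (kk : Fin m) (a b : Fin 1),
          quadForm L (q kk) a b = ∑ i, ∑ j, ((c2 * G i kk) * (c2 * G j kk)) • L i j := by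
        intro kk a b
        show (starM (q kk) * L * q kk) a b = _
        rw [Matrix.mul_apply]
        have h1 : ∀ j, (starM (q kk) * L) a j * q kk j b
            = ∑ i, ((c2 * G i kk) * (c2 * G j kk)) • L i j := by
          intro j
          rw [Matrix.mul_apply, Finset.sum_mul]
          refine Finset.sum_congr rfl fun i _ => ?_
          show (pstar (q kk i a) * L i j) * q kk j b = _
          have hqe : q kk i a = algebraMap ℝ (FreePoly g) (c2 * G i kk) := rfl
          have hqe2 : q kk j b = algebraMap ℝ (FreePoly g) (c2 * G j kk) := rfl
          rw [hqe, hqe2, pstar_algebraMap]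
          exact algebraMap_mul_smul _ _ _
        rw [Finset.sum_congr rfl fun j _ => h1 j]
        exact Finset.sum_comm
      have hquadsum : ∀ a b : Fin 1, (∑ kk, quadForm L (q kk)) a b = sfree + sfree := by
        intro a b
        rw [Matrix.sum_apply, Finset.sum_congr rfl fun kk _ => hquadent kk a b]
        have h1 : ∑ kk, ∑ i, ∑ j, ((c2 * G i kk) * (c2 * G j kk)) • L i j
            = ∑ i, ∑ j, (2 * GG i j) • L i j := by
          rw [(swap3 (fun i j kk => ((c2 * G i kk) * (c2 * G j kk)) • L i j)).symm]
          refine Finset.sum_congr rfl fun i _ => Finset.sum_congr rfl fun j _ => ?_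
          rw [← Finset.sum_smul]
          congr 1
          show (∑ kk, (c2 * G i kk) * (c2 * G j kk)) = 2 * GG i j
          have e1 : (2 : ℝ) * GG i j = ∑ kk, 2 * (G i kk * G j kk) := by
            show (2:ℝ) * (∑ kk, G i kk * G j kk) = _
            rw [Finset.mul_sum]
          rw [e1]
          exact Finset.sum_congr rfl fun kk _ => by rw [← hc2sq]; ring
        rw [h1]
        have h2 : ∑ i, ∑ j, (2 * GG i j) • L i j
            = ∑ p : Fin ν × Fin ν, (2 * GG p.1 p.2) • L p.1 p.2 :=
          (Fintype.sum_prod_type (fun p : Fin ν × Fin ν => (2 * GG p.1 p.2) • L p.1 p.2)).symm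
        rw [h2, hsfree, ← Finset.sum_add_distrib]
        refine Finset.sum_congr rfl fun p _ => ?_
        rw [← add_smul]
        congr 1
        ring
      have hmemb : ((∑ i : Fin 1, sqForm (p0 i)) + ∑ kk, quadForm L (q kk))
          ∈ modPlusStar J := by
        refine ⟨(fun _ _ => r), (fun _ _ => r), ?_, ?_, ?_⟩
        · intro z
          exact hrrow
        · intro z
          exact hrrow
        · refine Matrix.ext fun a b => ?_
          rw [Matrix.add_apply, Matrix.sum_apply, Fin.sum_univ_one]
          have hsq : sqForm (p0 0) a b = algebraMap ℝ (FreePoly g) (-(2*β)) := by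
            show pstar (algebraMap ℝ (FreePoly g) c0) * algebraMap ℝ (FreePoly g) c0 = _
            rw [pstar_algebraMap, ← _root_.map_mul, hc0sq]
          rw [hsq, hquadsum a b, key]
          have hRHS : ∀ (u v : Matrix (Fin 1) (Fin 1) (FreePoly g)),
              (u + starM v) a b = u a b + pstar (v b a) := fun u v => rfl
          show algebraMap ℝ (FreePoly g) (-(2*β))
              + (algebraMap ℝ (FreePoly g) (2*β) + r + pstar r) = r + pstar r
          rw [← add_assoc, ← add_assoc, ← _root_.map_add]
          have : (-(2*β) + 2*β : ℝ) = 0 := by ring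
          rw [this, _root_.map_zero, zero_add]
      obtain ⟨hpmem, hqmem⟩ := hJ 1 m p0 q hmemb
      rcases lt_or_eq_of_le hβle with hβlt | hβ0
      · have hc0ne : c0 ≠ 0 := by
          have : (0:ℝ) < -(2*β) := by linarith
          exact ne_of_gt (Real.sqrt_pos.mpr this)
        exact one_mem_of_const hc0ne (hpmem 0)
      · -- β = 0: produce a new good vector and recurse
        have hSne : S ≠ 0 := by
          intro h0
          apply hDne
          rw [← hSS, h0, mul_zero]
        have hexS : ∃ kk1 kk0, S kk1 kk0 ≠ 0 := by
          by_contra hcon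
          push_neg at hcon
          exact hSne (Matrix.ext fun a b => hcon a b)
        obtain ⟨kk1, kk0, hSne0⟩ := hexS
        set uK : K := ∑ kk', S kk' kk0 • bK kk' with huK
        have huKne : uK ≠ 0 := by
          intro h0
          refine hSne0 (Fintype.linearIndependent_iff.mp bK.linearIndependent
            (fun kk' => S kk' kk0) ?_ kk1)
          rw [← huK]
          exact h0
        set unew : EuclideanSpace ℝ (Fin ν) := (uK : EuclideanSpace ℝ (Fin ν)) with hunew
        have hunewK : unew ∈ K := Submodule.coe_mem uK
        have hunewne : unew ≠ 0 := fun h0 => huKne (Submodule.coe_eq_zero.mp h0)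
        have hunewco : ∀ i, unew i = G i kk0 := by
          intro i
          rw [hunew, huK]
          have h2 : ((∑ kk', S kk' kk0 • bK kk' : K) : EuclideanSpace ℝ (Fin ν))
              = ∑ kk', S kk' kk0 • (bK kk' : EuclideanSpace ℝ (Fin ν)) := by
            rw [AddSubmonoidClass.coe_finset_sum]
            exact Finset.sum_congr rfl fun kk' _ => rfl
          rw [h2, euclid_sum_apply]
          show (∑ kk', S kk' kk0 * P i kk') = G i kk0
          exact Finset.sum_congr rfl fun kk' _ => mul_comm _ _
        have hgoodnew : ∀ i, Φ i unew ∈ J.restrictScalars ℝ := by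
          intro i
          have h1 := hqmem kk0 i
          have h2 : (L * q kk0) i = Φ i ((c2 : ℝ) • unew) := by
            funext z
            show (L * q kk0) i z = ∑ j, ((c2 • unew : EuclideanSpace ℝ (Fin ν)) j) • L i j
            rw [Matrix.mul_apply]
            refine Finset.sum_congr rfl fun j _ => ?_
            have hsm : (c2 • unew : EuclideanSpace ℝ (Fin ν)) j = c2 * G j kk0 := by
              show c2 * unew j = _
              rw [hunewco j]
            rw [hsm]
            show L i j * q kk0 j z = (c2 * G j kk0) • L i j
            have hqv : q kk0 j z = algebraMap ℝ (FreePoly g) (c2 * G j kk0) := rfl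
            rw [hqv, ← Algebra.commutes, ← Algebra.smul_def]
          have h3 : Φ i ((c2:ℝ) • unew) ∈ J.restrictScalars ℝ := by
            rw [← h2]
            rw [Submodule.restrictScalars_mem]
            exact h1
          have h4 := Submodule.smul_mem (J.restrictScalars ℝ) (c2⁻¹) h3
          rw [← _root_.map_smul, smul_smul, inv_mul_cancel₀ hc2ne, one_smul] at h4
          exact h4
        set U' := U ⊔ Submodule.span ℝ {unew} with hU'
        have hgood' : ∀ i, U' ≤ Submodule.comap (Φ i) (J.restrictScalars ℝ) := by
          intro i
          refine sup_le (hgood i) ?_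
          rw [Submodule.span_singleton_le_iff_mem, Submodule.mem_comap]
          exact hgoodnew i
        have hnotU : unew ∉ U := by
          intro hmemU
          have h1 : unew ∈ U ⊓ Uᗮ := ⟨hmemU, hunewK⟩
          rw [Submodule.inf_orthogonal_eq_bot] at h1
          exact hunewne h1
        have hUlt : U < U' := by
          refine lt_of_le_of_ne le_sup_left ?_
          intro hEq
          apply hnotU
          rw [hEq]
          exact Submodule.mem_sup_right (Submodule.mem_span_singleton_self unew)
        have hrk := Submodule.finrank_lt_finrank_of_lt hUlt
        rw [hdU] at hrank
        have hlt : ν - Module.finrank ℝ ↥U' < k := by omega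
        exact ih _ hlt U' hgood' (le_refl _)

end MainInduction

/-- **Infeasibility of an LMI: `√[L]{0} = ℝ⟨x,x*⟩` iff `L(x) ⪰ 0` is infeasible over
`ℝ^g` iff it is infeasible over matrix tuples of every size.** -/
theorem lmi_infeasibility_tfae (g ν : ℕ) (hg : 0 < g)
    (L : Matrix (Fin ν) (Fin ν) (FreePoly g)) (hL : IsPencil L) :
    ((Lrad L (⊥ : Submodule (FreePoly g) (Fin 1 → FreePoly g)) = ⊤) ↔
      ¬∃ x : Fin g → ℝ,
        (evalM (fun i => Matrix.of fun _ _ : Fin 1 => x i) L).PosSemidef) ∧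
    ((¬∃ x : Fin g → ℝ,
        (evalM (fun i => Matrix.of fun _ _ : Fin 1 => x i) L).PosSemidef) ↔
      ∀ n : ℕ, 0 < n →
        ¬∃ X : Fin g → Matrix (Fin n) (Fin n) ℝ, (evalM X L).PosSemidef) := by
  constructor
  · constructor
    · rintro hrad ⟨x, hx⟩
      have hlam := (bridge hL x).mp hx
      have hle : Lrad L (⊥ : Submodule (FreePoly g) (Fin 1 → FreePoly g)) ≤ Jev x :=
        sInf_le ⟨bot_le, Jev_isLReal hL hlam⟩
      rw [hrad] at hle
      have h1 : (fun _ : Fin 1 => (1 : FreePoly g)) ∈ Jev x := hle Submodule.mem_top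
      rw [mem_Jev] at h1
      rw [_root_.map_one] at h1
      exact one_ne_zero h1
    · intro hinf
      have hinf' : ¬∃ x : Fin g → ℝ, (Lam L x).PosSemidef := by
        rintro ⟨x, hx⟩
        exact hinf ⟨x, (bridge hL x).mpr hx⟩
      rw [Lrad, sInf_eq_top]
      rintro J ⟨-, hJreal⟩
      rw [eq_top_iff]
      intro pp _
      have h1 := one_mem_of_isLReal hL hinf' hJreal
      have h2 : pp = (pp 0) • (fun _ : Fin 1 => (1 : FreePoly g)) := by
        funext z
        have hz : z = (0 : Fin 1) := Subsingleton.elim _ _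
        rw [hz]
        show pp 0 = pp 0 * 1
        rw [mul_one]
      rw [h2]
      exact Submodule.smul_mem _ _ h1
  · exact part2_iff hL
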